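/- arXiv:0907.4872 — 7 statements merged into one kernel-verified Lean document; each statement's English description precedes it below -/
import Mathlib

section
/- For every r ∈ ℝ^d, every z ∈ ℤ^d, and every n ∈ ℕ, one has M_r^n z = τ_r^n(z) - Σ_{j=1}^n M_r^{n-j} (0,...,0,v_j)^t, where v_j = {r·τ_r^{j-1}(z)}. -/
open Matrix Filter

noncomputable section

/-- Scalar product r·z of a real vector with an integer vector. -/
def srsDot {d : ℕ} (r : Fin d → ℝ) (z : Fin d → ℤ) : ℝ := ∑ i, r i * (z i : ℝ)

/-- The shift radix map τ_r(z) = (z_1,...,z_{d-1}, -⌊r·z⌋). -/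
def srsTau {d : ℕ} (r : Fin d → ℝ) (z : Fin d → ℤ) : Fin d → ℤ :=
  fun i => if h : (i : ℕ) + 1 < d then z ⟨(i : ℕ) + 1, h⟩ else -⌊srsDot r z⌋

/-- The companion matrix M_r of r. -/
def companion {d : ℕ} (r : Fin d → ℝ) : Matrix (Fin d) (Fin d) ℝ :=
  fun i j => if (i : ℕ) + 1 < d then (if (j : ℕ) = (i : ℕ) + 1 then 1 else 0) else -r j

/-- The vector (0,...,0,v)^t. -/
def digitVec {d : ℕ} (v : ℝ) : Fin d → ℝ := fun i => if (i : ℕ) + 1 = d then v else 0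

/-- Coordinatewise cast of an integer vector to a real vector. -/
def intToReal {d : ℕ} (z : Fin d → ℤ) : Fin d → ℝ := fun i => (z i : ℝ)

/-- M_r is contractive (spectral radius < 1). -/
def srsContractive {d : ℕ} (r : Fin d → ℝ) : Prop :=
  ∃ C > (0:ℝ), ∃ ρ : ℝ, 0 ≤ ρ ∧ ρ < 1 ∧
    ∀ (n : ℕ) (x : Fin d → ℝ), ‖((companion r) ^ n).mulVec x‖ ≤ C * ρ ^ n * ‖x‖

/-- The SRS tile T_r(x), as the set of limit points lim M_r^n z_{-n} with
τ_r^n(z_{-n}) = x. -/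
def srsTile {d : ℕ} (r : Fin d → ℝ) (x : Fin d → ℤ) : Set (Fin d → ℝ) :=
  {t | ∃ z : ℕ → (Fin d → ℤ), (∀ n, (srsTau r)^[n] (z n) = x) ∧
    Tendsto (fun n => ((companion r) ^ n).mulVec (intToReal (z n))) atTop (nhds t)}

lemma companion_mulVec_step {d : ℕ} (r : Fin d → ℝ) (z : Fin d → ℤ) :
    (companion r).mulVec (intToReal z) =
      intToReal (srsTau r z) - digitVec (Int.fract (srsDot r z)) := by
  funext i
  simp only [mulVec, dotProduct, companion, intToReal, srsTau, digitVec, Pi.sub_apply]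
  by_cases h : (i : ℕ) + 1 < d
  · have hne : ¬ ((i : ℕ) + 1 = d) := by omega
    simp only [if_pos h, dif_pos h, if_neg hne, sub_zero]
    rw [Finset.sum_eq_single (⟨(i : ℕ) + 1, h⟩ : Fin d)]
    · simp
    · intro b _ hb
      have : ¬ ((b : ℕ) = (i : ℕ) + 1) := by
        intro hc; exact hb (Fin.ext hc)
      simp [this]
    · simp
  · have heq : (i : ℕ) + 1 = d := by omega
    simp only [if_neg h, dif_neg h, if_pos heq]
    have : ∑ j, -r j * ((z j : ℤ) : ℝ) = -(srsDot r z) := by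
      simp [srsDot]
    rw [this]
    push_cast
    rw [Int.fract]
    ring

/-- M_r^n z = τ_r^n(z) - Σ_{j=1}^n M_r^{n-j}(0,...,0,v_j)^t where
v_j = {r·τ_r^{j-1}(z)}. -/
theorem pow_mulVec_eq_iterate_sub_sum (d : ℕ) (hd : 0 < d) (r : Fin d → ℝ)
    (z : Fin d → ℤ) (n : ℕ) :
    ((companion r) ^ n).mulVec (intToReal z) =
      intToReal ((srsTau r)^[n] z) -
        ∑ j ∈ Finset.range n,
          ((companion r) ^ (n - 1 - j)).mulVec
            (digitVec (Int.fract (srsDot r ((srsTau r)^[j] z)))) := by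
  induction n generalizing z with
  | zero => simp
  | succ n ih =>
    rw [pow_succ, ← mulVec_mulVec, companion_mulVec_step, mulVec_sub, ih (srsTau r z),
      Finset.sum_range_succ']
    simp only [← Function.iterate_succ_apply, ← Function.iterate_succ_apply',
      Function.iterate_zero, id]
    have h1 : ∀ j ∈ Finset.range n,
        ((companion r) ^ (n + 1 - 1 - (j + 1))).mulVec
            (digitVec (Int.fract (srsDot r ((srsTau r)^[j + 1] z)))) =
        ((companion r) ^ (n - 1 - j)).mulVec
            (digitVec (Int.fract (srsDot r ((srsTau r)^[j + 1] z)))) := by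
      intro j _
      have : n + 1 - 1 - (j + 1) = n - 1 - j := by omega
      rw [this]
    rw [Finset.sum_congr rfl h1]
    have h0 : n + 1 - 1 - 0 = n := by omega
    rw [h0]
    abel
end
end

section
/- Let r ∈ ℝ^d with r_0 ≠ 0 (so that M_r is invertible), z_0 ∈ ℤ^d, and v_0, v_{-1}, ..., v_{-n+1} ∈ [0,1). Suppose that for each 1 ≤ k ≤ n, the vector z_{-k} := M_r^{-k}(z_0 - Σ_{j=0}^{k-1} M_r^j (0,...,0,v_{-j})^t) lies in ℤ^d. Then τ_r^n(z_{-n}) = z_0, and for each 1 ≤ k ≤ n one has τ_r(z_{-k}) = z_{-k+1} and v_{-k+1} = {r·z_{-k}}. -/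
open Matrix Filter

noncomputable section

lemma companion_mulVec {d : ℕ} (r : Fin d → ℝ) (x : Fin d → ℝ) (i : Fin d) :
    (companion r).mulVec x i =
      if h : (i : ℕ) + 1 < d then x ⟨(i : ℕ) + 1, h⟩ else -∑ j, r j * x j := by
  unfold companion Matrix.mulVec dotProduct
  split
  · next h =>
    rw [Finset.sum_eq_single (⟨(i:ℕ)+1, h⟩ : Fin d)]
    · simp [h]
    · intro b _ hb
      have hb' : (b : ℕ) ≠ (i:ℕ) + 1 := fun hb' => hb (Fin.ext hb')
      simp [h, hb']
    · simp
  · next h =>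
    simp [h, Finset.sum_neg_distrib, neg_mul]

lemma companion_isUnit_det {d : ℕ} (hd : 0 < d) (r : Fin d → ℝ)
    (hr0 : r ⟨0, hd⟩ ≠ 0) : IsUnit (companion r).det := by
  rw [← Matrix.isUnit_iff_isUnit_det, ← Matrix.mulVec_injective_iff_isUnit]
  intro x y hxy
  have h1 : ∀ (i : Fin d) (h : (i:ℕ) + 1 < d), x ⟨(i:ℕ)+1, h⟩ = y ⟨(i:ℕ)+1, h⟩ := by
    intro i hi
    have := congrFun hxy i
    rwa [companion_mulVec, companion_mulVec, dif_pos hi, dif_pos hi] at this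
  have h2 : ∀ i : Fin d, (i:ℕ) ≠ 0 → x i = y i := by
    intro i hi
    have hid : (i:ℕ) < d := i.isLt
    have hi' : ((⟨(i:ℕ)-1, by omega⟩ : Fin d) : ℕ) + 1 < d := by simp; omega
    have := h1 ⟨(i:ℕ)-1, by omega⟩ hi'
    convert this using 2 <;> exact Fin.ext (by simp; omega)
  -- last row
  have hlast : ∑ j, r j * x j = ∑ j, r j * y j := by
    have hi : ¬ ((⟨d-1, by omega⟩ : Fin d) : ℕ) + 1 < d := by simp; omega
    have := congrFun hxy ⟨d-1, by omega⟩
    rw [companion_mulVec, companion_mulVec, dif_neg hi, dif_neg hi] at this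
    linarith
  have h0 : x ⟨0, hd⟩ = y ⟨0, hd⟩ := by
    have : ∀ j : Fin d, j ≠ ⟨0, hd⟩ → r j * x j = r j * y j := by
      intro j hj
      rw [h2 j (fun h => hj (Fin.ext h))]
    have hsum := hlast
    rw [← Finset.add_sum_erase _ _ (Finset.mem_univ (⟨0, hd⟩ : Fin d)),
        ← Finset.add_sum_erase _ _ (Finset.mem_univ (⟨0, hd⟩ : Fin d))] at hsum
    have heq : ∑ j ∈ Finset.univ.erase (⟨0,hd⟩ : Fin d), r j * x j
        = ∑ j ∈ Finset.univ.erase (⟨0,hd⟩ : Fin d), r j * y j := by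
      refine Finset.sum_congr rfl fun j hj => this j (Finset.ne_of_mem_erase hj)
    have := mul_left_cancel₀ hr0 (by linarith : r ⟨0,hd⟩ * x ⟨0,hd⟩ = r ⟨0,hd⟩ * y ⟨0,hd⟩)
    exact this
  funext i
  by_cases hi : (i:ℕ) = 0
  · have : i = ⟨0, hd⟩ := Fin.ext hi
    rw [this]; exact h0
  · exact h2 i hi

set_option maxHeartbeats 1000000 in
/-- if the backward divisions z_{-k} = M_r^{-k}(z_0 - Σ_{j<k} M_r^j (0,…,0,v_{-j})^t)
are all integer vectors, then τ_r^n(z_{-n}) = z_0, and τ_r(z_{-k}) = z_{-k+1} with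
v_{-k+1} = {r·z_{-k}} for 1 ≤ k ≤ n. -/
theorem srs_backward_expansion (d : ℕ) (hd : 0 < d) (r : Fin d → ℝ)
    (hr0 : r ⟨0, hd⟩ ≠ 0) (n : ℕ) (v : ℕ → ℝ)
    (hv : ∀ j < n, v j ∈ Set.Ico (0:ℝ) 1)
    (zm : ℕ → (Fin d → ℤ))
    (hzm : ∀ k, 1 ≤ k → k ≤ n →
      intToReal (zm k) = (((companion r)⁻¹) ^ k).mulVec
        (intToReal (zm 0) -
          ∑ j ∈ Finset.range k, ((companion r) ^ j).mulVec (digitVec (v j)))) :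
    (srsTau r)^[n] (zm n) = zm 0 ∧
      ∀ k, 1 ≤ k → k ≤ n →
        srsTau r (zm k) = zm (k - 1) ∧ v (k - 1) = Int.fract (srsDot r (zm k)) := by
  set M := companion r with hMdef
  have hu : IsUnit M.det := companion_isUnit_det hd r hr0
  have hzm' : ∀ k, k ≤ n → intToReal (zm k) = ((M⁻¹)^k).mulVec
      (intToReal (zm 0) - ∑ j ∈ Finset.range k, (M^j).mulVec (digitVec (v j))) := by
    intro k hk
    rcases Nat.eq_zero_or_pos k with h0 | h0
    · subst h0; simp [Matrix.one_mulVec]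
    · exact hzm k h0 hk
  have hpow : ∀ j : ℕ, ((M⁻¹)^j) * (M^j) = 1 := by
    intro j
    induction j with
    | zero => simp
    | succ j ih =>
      rw [pow_succ, pow_succ', mul_assoc, ← mul_assoc M⁻¹ M,
        Matrix.nonsing_inv_mul _ hu, one_mul, ih]
  have key : ∀ k, 1 ≤ k → k ≤ n →
      M.mulVec (intToReal (zm k)) = intToReal (zm (k-1)) - digitVec (v (k-1)) := by
    intro k hk1 hkn
    obtain ⟨m, rfl⟩ : ∃ m, k = m + 1 := ⟨k-1, by omega⟩
    have hA := hzm' (m+1) hkn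
    have hB := hzm' m (by omega)
    have hMM : M * (M⁻¹)^(m+1) = (M⁻¹)^m := by
      rw [pow_succ', ← mul_assoc, Matrix.mul_nonsing_inv _ hu, one_mul]
    rw [hA, Matrix.mulVec_mulVec, hMM, Finset.sum_range_succ, ← sub_sub,
      Matrix.mulVec_sub, ← hB, Matrix.mulVec_mulVec, hpow, Matrix.one_mulVec]
    simp
  have step : ∀ k, 1 ≤ k → k ≤ n →
      srsTau r (zm k) = zm (k-1) ∧ v (k-1) = Int.fract (srsDot r (zm k)) := by
    intro k hk1 hkn
    have hkey := key k hk1 hkn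
    obtain ⟨hv0, hv1⟩ := hv (k-1) (by omega)
    have hlastidx : ¬ ((⟨d-1, by omega⟩ : Fin d):ℕ) + 1 < d := by simp; omega
    have hlast := congrFun hkey ⟨d-1, by omega⟩
    rw [hMdef, companion_mulVec, dif_neg hlastidx] at hlast
    have hdig : digitVec (d := d) (v (k-1)) ⟨d-1, by omega⟩ = v (k-1) := by
      simp only [digitVec]; rw [if_pos (by omega)]
    simp only [Pi.sub_apply, hdig, intToReal] at hlast
    have hdot : srsDot r (zm k) = v (k-1) - ((zm (k-1) ⟨d-1, by omega⟩ : ℤ) : ℝ) := by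
      unfold srsDot; linarith
    have hfract : Int.fract (srsDot r (zm k)) = v (k-1) := by
      rw [hdot, Int.fract_sub_intCast, Int.fract_eq_self.mpr ⟨hv0, hv1⟩]
    have hfloor : ⌊srsDot r (zm k)⌋ = -(zm (k-1) ⟨d-1, by omega⟩) := by
      rw [hdot, Int.floor_sub_intCast, Int.floor_eq_zero_iff.mpr ⟨hv0, hv1⟩]; ring
    constructor
    · funext i
      unfold srsTau
      split
      · next h =>
        have hi := congrFun hkey i
        rw [hMdef, companion_mulVec, dif_pos h] at hi
        have hdig0 : digitVec (d := d) (v (k-1)) i = 0 := by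
          simp only [digitVec]; rw [if_neg (by omega)]
        simp only [Pi.sub_apply, hdig0, intToReal, sub_zero] at hi
        exact_mod_cast hi
      · next h =>
        have hlt := i.isLt
        rw [hfloor, neg_neg]
        congr 1
        exact Fin.ext (by simp only [Fin.val_mk]; omega)
    · exact hfract.symm
  refine ⟨?_, step⟩
  have main : ∀ k, k ≤ n → (srsTau r)^[k] (zm k) = zm 0 := by
    intro k
    induction k with
    | zero => intro _; rfl
    | succ k ih =>
      intro hk
      rw [Function.iterate_succ_apply, (step (k+1) (by omega) hk).1]
      simpa using ih (by omega)
  exact main n le_rfl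
end
end

section
/- If r = (r_0,...,r_{d-1}) ∈ ℝ^d with r_0 ≠ 0 and 0 < |r_0| < 1, then the map τ_r : ℤ^d → ℤ^d is surjective. -/
open Matrix Filter

noncomputable section

lemma exists_floor_eq (a : ℝ) (ha : a ≠ 0) (hab : |a| < 1) (c : ℝ) (m : ℤ) :
    ∃ n : ℤ, ⌊a * n + c⌋ = m := by
  rcases ha.lt_or_gt with h | h
  · refine ⟨⌊((m:ℝ) - c)/a⌋, ?_⟩
    have h1 : (⌊((m:ℝ)-c)/a⌋ : ℝ) ≤ ((m:ℝ)-c)/a := Int.floor_le _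
    have h2 : ((m:ℝ)-c)/a - 1 < (⌊((m:ℝ)-c)/a⌋ : ℝ) := Int.sub_one_lt_floor _
    have h3 : ((m:ℝ)-c)/a * a = (m:ℝ)-c := div_mul_cancel₀ _ ha
    have habs : -a < 1 := by rwa [abs_of_neg h] at hab
    rw [Int.floor_eq_iff]
    constructor <;> nlinarith
  · refine ⟨⌈((m:ℝ) - c)/a⌉, ?_⟩
    have h1 : ((m:ℝ)-c)/a ≤ (⌈((m:ℝ)-c)/a⌉ : ℝ) := Int.le_ceil _
    have h2 : (⌈((m:ℝ)-c)/a⌉ : ℝ) < ((m:ℝ)-c)/a + 1 := Int.ceil_lt_add_one _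
    have h3 : ((m:ℝ)-c)/a * a = (m:ℝ)-c := div_mul_cancel₀ _ ha
    have habs : a < 1 := by rwa [abs_of_pos h] at hab
    rw [Int.floor_eq_iff]
    constructor <;> nlinarith


/-- if 0 < |r_0| < 1 then τ_r is surjective. -/
theorem srsTau_surjective (d : ℕ) (hd : 0 < d) (r : Fin d → ℝ)
    (hr0 : r ⟨0, hd⟩ ≠ 0) (hr1 : |r ⟨0, hd⟩| < 1) :
    Function.Surjective (srsTau r) := by
  intro x
  set w : Fin d → ℤ := fun i => if h : (i : ℕ) = 0 then 0 else x ⟨(i:ℕ)-1, by omega⟩ with hw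
  set c : ℝ := srsDot r w with hc
  obtain ⟨n, hn⟩ := exists_floor_eq (r ⟨0, hd⟩) hr0 hr1 c (-(x ⟨d-1, by omega⟩))
  set z : Fin d → ℤ := fun i => w i + if (i : ℕ) = 0 then n else 0 with hz
  have hdot : srsDot r z = r ⟨0, hd⟩ * n + c := by
    have : srsDot r z = (∑ i, r i * (w i : ℝ)) +
        ∑ i, r i * (if (i : ℕ) = 0 then (n:ℝ) else 0) := by
      rw [← Finset.sum_add_distrib]
      apply Finset.sum_congr rfl
      intro i _
      simp only [hz]
      push_cast
      split <;> ring
    rw [this, hc, srsDot, add_comm]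
    congr 1
    rw [Finset.sum_eq_single (⟨0, hd⟩ : Fin d)]
    · simp
    · intro b _ hb
      have : (b : ℕ) ≠ 0 := fun h => hb (Fin.ext h)
      simp [this]
    · simp
  refine ⟨z, ?_⟩
  funext i
  unfold srsTau
  split
  · next h =>
    have h1 : ((⟨(i:ℕ)+1, h⟩ : Fin d) : ℕ) ≠ 0 := Nat.succ_ne_zero _
    show w ⟨(i:ℕ)+1, h⟩ + _ = x i
    rw [if_neg h1, add_zero, hw]
    simp only [dif_neg h1]
    congr 1
  · next h =>
    have hi : (i : ℕ) = d - 1 := by omega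
    rw [hdot, hn]
    have : i = ⟨d-1, by omega⟩ := Fin.ext (by simpa using hi)
    rw [this]
    ring
end
end

section
/- Let r ∈ ℝ^d with r_0 ≠ 0 and M_r contractive with ‖M_r x‖ ≤ ρ̃‖x‖, ρ̃ < 1. Then for every x ∈ ℤ^d and every n ∈ ℕ, the Hausdorff distance between M_r^n τ_r^{-n}(x) and M_r^{n+1} τ_r^{-n-1}(x) is at most ρ̃^n ‖(0,...,0,1)^t‖; in particular (M_r^n τ_r^{-n}(x))_{n≥0} is a Cauchy sequence with respect to the Hausdorff metric. -/
open Matrix Filter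

noncomputable section

lemma nm_zero {d : ℕ} (Nm : (Fin d → ℝ) → ℝ)
    (hsmul : ∀ (c : ℝ) x, Nm (c • x) = |c| * Nm x) : Nm 0 = 0 := by
  have := hsmul 0 0
  simpa using this


lemma nm_sum_le {d : ℕ} (Nm : (Fin d → ℝ) → ℝ)
    (hadd : ∀ x y, Nm (x + y) ≤ Nm x + Nm y)
    (hsmul : ∀ (c : ℝ) x, Nm (c • x) = |c| * Nm x)
    {ι : Type*} (s : Finset ι) (g : ι → (Fin d → ℝ)) :
    Nm (∑ i ∈ s, g i) ≤ ∑ i ∈ s, Nm (g i) := by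
  classical
  induction s using Finset.induction with
  | empty => simp [nm_zero Nm hsmul]
  | insert _ _ hx ih =>
    rw [Finset.sum_insert hx, Finset.sum_insert hx]
    exact le_trans (hadd _ _) (by linarith)


lemma nm_upper {d : ℕ} (Nm : (Fin d → ℝ) → ℝ)
    (hadd : ∀ x y, Nm (x + y) ≤ Nm x + Nm y)
    (hsmul : ∀ (c : ℝ) x, Nm (c • x) = |c| * Nm x)
    (hpos : ∀ x, 0 ≤ Nm x)
    (v : Fin d → ℝ) :
    Nm v ≤ (∑ i, Nm (Pi.single i 1)) * ‖v‖ := by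
  classical
  have hv : v = ∑ i, (v i) • (Pi.single i 1 : Fin d → ℝ) := by
    funext j
    simp [Pi.single_apply, Finset.sum_apply, mul_comm]
  calc Nm v = Nm (∑ i, (v i) • (Pi.single i 1 : Fin d → ℝ)) := by rw [← hv]
    _ ≤ ∑ i, Nm ((v i) • (Pi.single i 1 : Fin d → ℝ)) := nm_sum_le Nm hadd hsmul _ _
    _ = ∑ i, |v i| * Nm (Pi.single i (1:ℝ)) := by simp [hsmul]
    _ ≤ ∑ i, ‖v‖ * Nm (Pi.single i (1:ℝ)) := by
        apply Finset.sum_le_sum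
        intro i _
        have h1 : |v i| ≤ ‖v‖ := by
          simpa using norm_le_pi_norm v i
        exact mul_le_mul_of_nonneg_right h1 (hpos _)
    _ = (∑ i, Nm (Pi.single i 1)) * ‖v‖ := by rw [Finset.sum_mul]; exact Finset.sum_congr rfl fun i _ => mul_comm _ _

lemma nm_lower {d : ℕ} (hd : 0 < d) (Nm : (Fin d → ℝ) → ℝ)
    (hadd : ∀ x y, Nm (x + y) ≤ Nm x + Nm y)
    (hsmul : ∀ (c : ℝ) x, Nm (c • x) = |c| * Nm x)
    (hpos : ∀ x, 0 ≤ Nm x)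
    (hdef : ∀ x, Nm x = 0 → x = 0) :
    ∃ m > (0:ℝ), ∀ v : Fin d → ℝ, m * ‖v‖ ≤ Nm v := by
  classical
  set C : ℝ := ∑ i, Nm (Pi.single i 1) with hC
  have hnm_neg : ∀ u : Fin d → ℝ, Nm (-u) = Nm u := by
    intro u
    have := hsmul (-1) u
    simpa using this
  have hlip : ∀ u v : Fin d → ℝ, |Nm u - Nm v| ≤ C * ‖u - v‖ := by
    intro u v
    have h1 : Nm u - Nm v ≤ Nm (u - v) := by
      have := hadd v (u - v); simp at this; linarith
    have h2 : Nm v - Nm u ≤ Nm (u - v) := by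
      have := hadd u (v - u)
      simp at this
      have : Nm v - Nm u ≤ Nm (v - u) := by linarith
      rwa [show v - u = -(u - v) by ring, hnm_neg] at this
    have h3 : Nm (u - v) ≤ C * ‖u - v‖ := nm_upper Nm hadd hsmul hpos _
    rw [abs_le]; constructor <;> linarith
  have hCpos : 0 ≤ C := Finset.sum_nonneg fun i _ => hpos _
  have hcont : Continuous Nm := by
    apply (LipschitzWith.of_dist_le_mul (K := C.toNNReal) ?_).continuous
    intro u v
    rw [Real.dist_eq, dist_eq_norm]
    calc |Nm u - Nm v| ≤ C * ‖u - v‖ := hlip u v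
      _ ≤ C.toNNReal * ‖u - v‖ := by
          apply mul_le_mul_of_nonneg_right _ (norm_nonneg _)
          exact Real.le_coe_toNNReal C
  have hne : (Metric.sphere (0 : Fin d → ℝ) 1).Nonempty := by
    haveI : Nonempty (Fin d) := ⟨⟨0, hd⟩⟩
    refine ⟨(fun _ => 1 : Fin d → ℝ), ?_⟩
    simp [Metric.mem_sphere, dist_eq_norm]
  obtain ⟨v0, hv0S, hmin⟩ := (isCompact_sphere (0 : Fin d → ℝ) 1).exists_isMinOn hne
    hcont.continuousOn
  have hv0norm : ‖v0‖ = 1 := by simpa [dist_eq_norm] using hv0S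
  have hv0ne : v0 ≠ 0 := by
    intro h; rw [h] at hv0norm; simp at hv0norm
  have hm : 0 < Nm v0 := by
    rcases lt_or_eq_of_le (hpos v0) with h | h
    · exact h
    · exact absurd (hdef v0 h.symm) hv0ne
  refine ⟨Nm v0, hm, fun v => ?_⟩
  rcases eq_or_ne v 0 with rfl | hv
  · simp [nm_zero Nm hsmul, hpos]
  · have hnv : (0:ℝ) < ‖v‖ := norm_pos_iff.mpr hv
    have hu : (‖v‖⁻¹ • v) ∈ Metric.sphere (0 : Fin d → ℝ) 1 := by
      simp [dist_eq_norm, norm_smul, abs_of_pos (inv_pos.mpr hnv), inv_mul_cancel₀ hnv.ne']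
    have := hmin hu
    have heq : Nm v = ‖v‖ * Nm (‖v‖⁻¹ • v) := by
      rw [hsmul, abs_of_pos (inv_pos.mpr hnv)]
      field_simp
    rw [heq]
    have : Nm v0 ≤ Nm (‖v‖⁻¹ • v) := hmin hu
    nlinarith

lemma det_companion {d : ℕ} (hd : 0 < d) (r : Fin d → ℝ) :
    |(companion r).det| = |r ⟨0, hd⟩| := by
  classical
  obtain ⟨d', rfl⟩ : ∃ d', d = d' + 1 := ⟨d - 1, by omega⟩
  rw [Matrix.det_succ_column_zero]
  rw [Finset.sum_eq_single (Fin.last d')]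
  · have hA : companion r (Fin.last d') 0 = -r 0 := by
      simp [companion, Fin.last]
    have hsub : (companion r).submatrix (Fin.last d').succAbove Fin.succ = 1 := by
      ext i j
      have hi : ((Fin.last d').succAbove i : ℕ) = (i : ℕ) := by
        simp [Fin.succAbove, Fin.castSucc_lt_last]
      have : ((i : ℕ) + 1 < d' + 1) := by omega
      simp [Matrix.submatrix, companion, hi, this, Matrix.one_apply, Fin.ext_iff, eq_comm]
    rw [hA, hsub, Matrix.det_one]
    have : r ⟨0, hd⟩ = r 0 := rfl
    rw [this]
    rw [abs_mul, abs_mul]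
    simp [abs_pow]
  · intro i _ hi
    have hlt : (i : ℕ) + 1 < d' + 1 := by
      have : (i : ℕ) < d' + 1 := i.isLt
      have : (i : ℕ) ≠ d' := fun h => hi (Fin.ext h)
      omega
    have : companion r i 0 = 0 := by
      simp [companion, hlt]
    simp [this]
  · simp

lemma hcontr_pow {d : ℕ} (r : Fin d → ℝ) (Nm : (Fin d → ℝ) → ℝ) (ρ : ℝ) (hρ0 : 0 ≤ ρ)
    (hcontr : ∀ x, Nm ((companion r).mulVec x) ≤ ρ * Nm x)
    (n : ℕ) : ∀ (v : Fin d → ℝ),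
    Nm (((companion r) ^ n).mulVec v) ≤ ρ ^ n * Nm v := by
  induction n with
  | zero => intro v; simp [Matrix.one_mulVec]
  | succ n ih =>
    intro v
    have h1 : ((companion r) ^ (n+1)).mulVec v
        = ((companion r) ^ n).mulVec ((companion r).mulVec v) := by
      rw [pow_succ, Matrix.mulVec_mulVec]
    rw [h1]
    calc Nm (((companion r) ^ n).mulVec ((companion r).mulVec v))
        ≤ ρ ^ n * Nm ((companion r).mulVec v) := ih _
      _ ≤ ρ ^ n * (ρ * Nm v) := by
          exact mul_le_mul_of_nonneg_left (hcontr v) (pow_nonneg hρ0 n)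
      _ = ρ ^ (n+1) * Nm v := by ring


lemma r0_abs_le_one {d : ℕ} (hd : 0 < d) (r : Fin d → ℝ)
    (Nm : (Fin d → ℝ) → ℝ) (ρ : ℝ) (hρ0 : 0 ≤ ρ) (hρ : ρ < 1)
    (hadd : ∀ x y, Nm (x + y) ≤ Nm x + Nm y)
    (hsmul : ∀ (c : ℝ) x, Nm (c • x) = |c| * Nm x)
    (hpos : ∀ x, 0 ≤ Nm x)
    (hdef : ∀ x, Nm x = 0 → x = 0)
    (hcontr : ∀ x, Nm ((companion r).mulVec x) ≤ ρ * Nm x) :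
    |r ⟨0, hd⟩| ≤ 1 := by
  classical
  by_contra hr
  push_neg at hr
  obtain ⟨m, hm, hlow⟩ := nm_lower hd Nm hadd hsmul hpos hdef
  set C : ℝ := ∑ i, Nm (Pi.single i 1) with hC
  set K : ℝ := m⁻¹ * C with hK
  have hCpos : 0 ≤ C := Finset.sum_nonneg fun i _ => hpos _
  have hK0 : 0 ≤ K := mul_nonneg (inv_nonneg.mpr hm.le) hCpos
  -- entry bound
  have hentry : ∀ (n : ℕ) (i j : Fin d), |((companion r) ^ n) i j| ≤ K * ρ ^ n := by
    intro n i j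
    have hcol : ((companion r) ^ n).mulVec (Pi.single j 1)
        = fun i => ((companion r) ^ n) i j := by
      rw [Matrix.mulVec_single]
      funext k; simp
    have h1 : |((companion r) ^ n) i j| ≤ ‖((companion r) ^ n).mulVec (Pi.single j 1)‖ := by
      rw [hcol]
      simpa using norm_le_pi_norm (fun i => ((companion r) ^ n) i j) i
    have h2 : m * ‖((companion r) ^ n).mulVec (Pi.single j 1)‖
        ≤ Nm (((companion r) ^ n).mulVec (Pi.single j 1)) := hlow _
    have h3 : Nm (((companion r) ^ n).mulVec (Pi.single j 1)) ≤ ρ ^ n * Nm (Pi.single j 1) :=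
      hcontr_pow r Nm ρ hρ0 hcontr n _
    have h4 : Nm (Pi.single j (1:ℝ)) ≤ C := by
      rw [hC]
      exact Finset.single_le_sum (f := fun i => Nm (Pi.single i 1)) (fun i _ => hpos _)
        (Finset.mem_univ j)
    have h5 : ‖((companion r) ^ n).mulVec (Pi.single j 1)‖ ≤ m⁻¹ * (ρ ^ n * C) := by
      rw [le_inv_mul_iff₀ hm]
      calc m * ‖((companion r) ^ n).mulVec (Pi.single j 1)‖
          ≤ Nm (((companion r) ^ n).mulVec (Pi.single j 1)) := h2
        _ ≤ ρ ^ n * Nm (Pi.single j 1) := h3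
        _ ≤ ρ ^ n * C := mul_le_mul_of_nonneg_left h4 (pow_nonneg hρ0 n)
    calc |((companion r) ^ n) i j| ≤ m⁻¹ * (ρ ^ n * C) := le_trans h1 h5
      _ = K * ρ ^ n := by rw [hK]; ring
  -- determinant bound
  have hdet : ∀ n : ℕ, |r ⟨0, hd⟩| ^ n ≤ (d.factorial : ℝ) * (K ^ d * (ρ ^ d) ^ n) := by
    intro n
    have h1 : |((companion r) ^ n).det| ≤ d.factorial • (K * ρ ^ n) ^ d := by
      have := Matrix.det_le (A := (companion r) ^ n) (abv := AbsoluteValue.abs)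
        (x := K * ρ ^ n) (fun i j => hentry n i j)
      simpa [Fintype.card_fin] using this
    have h2 : |((companion r) ^ n).det| = |r ⟨0, hd⟩| ^ n := by
      rw [Matrix.det_pow, abs_pow, det_companion hd r]
    rw [← h2]
    calc |((companion r) ^ n).det| ≤ d.factorial • (K * ρ ^ n) ^ d := h1
      _ = (d.factorial : ℝ) * (K ^ d * (ρ ^ n) ^ d) := by
          rw [nsmul_eq_mul, mul_pow]
      _ = (d.factorial : ℝ) * (K ^ d * (ρ ^ d) ^ n) := by
          rw [← pow_mul, ← pow_mul, mul_comm n d]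
  -- contradiction
  set D : ℝ := (d.factorial : ℝ) * K ^ d with hD
  have hD0 : 0 ≤ D := mul_nonneg (Nat.cast_nonneg _) (pow_nonneg hK0 _)
  have hq : ρ ^ d < 1 := pow_lt_one₀ hρ0 hρ (by omega)
  have hq0 : 0 ≤ ρ ^ d := pow_nonneg hρ0 _
  obtain ⟨n, hn⟩ := exists_pow_lt_of_lt_one (x := (D + 1)⁻¹) (by positivity) hq
  have h1 : (1:ℝ) ≤ |r ⟨0, hd⟩| ^ n := one_le_pow₀ hr.le
  have h2 : |r ⟨0, hd⟩| ^ n ≤ D * (ρ ^ d) ^ n := by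
    have := hdet n
    rw [hD]; linarith [hdet n]
  have h3 : D * (ρ ^ d) ^ n < 1 := by
    calc D * (ρ ^ d) ^ n ≤ D * (D + 1)⁻¹ := by
          exact mul_le_mul_of_nonneg_left hn.le hD0
      _ < 1 := by
          rw [mul_inv_lt_iff₀ (by positivity)]
          linarith
  linarith

lemma floor_hit (a c : ℝ) (ha : a ≠ 0) (ha1 : |a| ≤ 1) (n : ℤ) :
    ∃ k : ℤ, ⌊a * k + c⌋ = n := by
  rcases lt_or_gt_of_ne ha with hneg | hpos
  · refine ⟨⌊((n : ℝ) - c) / a⌋, ?_⟩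
    have h1 : (⌊((n : ℝ) - c) / a⌋ : ℝ) ≤ ((n : ℝ) - c) / a := Int.floor_le _
    have h2 : ((n : ℝ) - c) / a - 1 < ⌊((n : ℝ) - c) / a⌋ := Int.sub_one_lt_floor _
    have hge : (n : ℝ) ≤ a * ⌊((n : ℝ) - c) / a⌋ + c := by
      have := mul_le_mul_of_nonpos_left h1 hneg.le
      rw [mul_div_cancel₀ _ ha] at this
      linarith
    have hlt : a * ⌊((n : ℝ) - c) / a⌋ + c < n + 1 := by
      have := mul_lt_mul_of_neg_left h2 hneg
      rw [mul_sub, mul_one, mul_div_cancel₀ _ ha] at this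
      have haa : -a ≤ 1 := by rw [abs_of_neg hneg] at ha1; linarith
      linarith
    rw [Int.floor_eq_iff]
    exact ⟨hge, hlt⟩
  · refine ⟨⌈((n : ℝ) - c) / a⌉, ?_⟩
    have h1 : ((n : ℝ) - c) / a ≤ ⌈((n : ℝ) - c) / a⌉ := Int.le_ceil _
    have h2 : (⌈((n : ℝ) - c) / a⌉ : ℝ) < ((n : ℝ) - c) / a + 1 := Int.ceil_lt_add_one _
    have hge : (n : ℝ) ≤ a * ⌈((n : ℝ) - c) / a⌉ + c := by
      have := mul_le_mul_of_nonneg_left h1 hpos.le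
      rw [mul_div_cancel₀ _ ha] at this
      linarith
    have hlt : a * ⌈((n : ℝ) - c) / a⌉ + c < n + 1 := by
      have := mul_lt_mul_of_pos_left h2 hpos
      rw [mul_add, mul_one, mul_div_cancel₀ _ ha] at this
      have haa : a ≤ 1 := by rw [abs_of_pos hpos] at ha1; linarith
      linarith
    rw [Int.floor_eq_iff]
    exact ⟨hge, hlt⟩


lemma tau_preimage {d : ℕ} (hd : 0 < d) (r : Fin d → ℝ) (hr0 : r ⟨0, hd⟩ ≠ 0)
    (hr1 : |r ⟨0, hd⟩| ≤ 1) (z : Fin d → ℤ) :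
    ∃ w : Fin d → ℤ, srsTau r w = z := by
  classical
  set i0 : Fin d := ⟨0, hd⟩ with hi0
  set u : Fin d → ℤ := fun i => if h : (i : ℕ) = 0 then 0 else z ⟨(i : ℕ) - 1, by omega⟩
    with hu
  set c : ℝ := ∑ i ∈ Finset.univ.erase i0, r i * (u i : ℝ) with hc
  obtain ⟨k, hk⟩ := floor_hit (r i0) c hr0 hr1 (-(z ⟨d - 1, by omega⟩))
  set w : Fin d → ℤ := Function.update u i0 k with hw
  have hdot : srsDot r w = r i0 * k + c := by
    rw [srsDot, ← Finset.add_sum_erase Finset.univ _ (Finset.mem_univ i0)]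
    have hw0 : w i0 = k := Function.update_self _ _ _
    have hrest : ∑ i ∈ Finset.univ.erase i0, r i * (w i : ℝ) = c := by
      rw [hc]
      apply Finset.sum_congr rfl
      intro i hi
      rw [hw, Function.update_of_ne (Finset.mem_erase.mp hi).1]
    rw [hw0, hrest]
  refine ⟨w, ?_⟩
  funext i
  rw [srsTau]
  by_cases h : (i : ℕ) + 1 < d
  · rw [dif_pos h]
    have hne : (⟨(i : ℕ) + 1, h⟩ : Fin d) ≠ i0 := by
      simp [hi0, Fin.ext_iff]
    rw [hw, Function.update_of_ne hne, hu]
    simp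
  · rw [dif_neg h]
    have hieq : i = ⟨d - 1, by omega⟩ := by
      have := i.isLt
      apply Fin.ext
      simp
      omega
    rw [hdot, hk, hieq]
    simp

lemma tau_mulVec_diff {d : ℕ} (r : Fin d → ℝ) (w : Fin d → ℤ) :
    intToReal (srsTau r w) - (companion r).mulVec (intToReal w)
      = Int.fract (srsDot r w) • digitVec 1 := by
  classical
  funext i
  simp only [Pi.sub_apply, Pi.smul_apply, digitVec, smul_eq_mul]
  by_cases h : (i : ℕ) + 1 < d
  · have h2 : (i : ℕ) + 1 ≠ d := by omega
    rw [if_neg h2, mul_zero]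
    have hmv : (companion r).mulVec (intToReal w) i = (w ⟨(i : ℕ) + 1, h⟩ : ℝ) := by
      rw [Matrix.mulVec, dotProduct]
      have : ∀ j : Fin d, companion r i j * intToReal w j
          = if j = (⟨(i : ℕ) + 1, h⟩ : Fin d) then (w j : ℝ) else 0 := by
        intro j
        rw [companion, if_pos h, intToReal]
        by_cases hj : j = (⟨(i : ℕ) + 1, h⟩ : Fin d)
        · rw [if_pos hj, if_pos (by rw [hj]), one_mul]
        · rw [if_neg hj, if_neg (fun hc => hj (Fin.ext hc)), zero_mul]
      rw [Finset.sum_congr rfl (fun j _ => this j)]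
      simp
    rw [hmv, intToReal, srsTau, dif_pos h, sub_self]
  · have hτ : srsTau r w i = -⌊srsDot r w⌋ := by rw [srsTau, dif_neg h]
    have h2 : (i : ℕ) + 1 = d := by have := i.isLt; omega
    rw [if_pos h2, mul_one]
    have hmv : (companion r).mulVec (intToReal w) i = -srsDot r w := by
      rw [Matrix.mulVec, dotProduct, srsDot, ← Finset.sum_neg_distrib]
      apply Finset.sum_congr rfl
      intro j _
      rw [companion, if_neg h, intToReal]
      ring
    rw [hmv, intToReal, hτ, Int.fract]
    push_cast
    ring

section Main
variable {d : ℕ} (hd : 0 < d) (r : Fin d → ℝ)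
  (Nm : (Fin d → ℝ) → ℝ) (ρ : ℝ) (hρ0 : 0 ≤ ρ) (hρ : ρ < 1)
  (hadd : ∀ x y, Nm (x + y) ≤ Nm x + Nm y)
  (hsmul : ∀ (c : ℝ) x, Nm (c • x) = |c| * Nm x)
  (hpos : ∀ x, 0 ≤ Nm x)
  (hcontr : ∀ x, Nm ((companion r).mulVec x) ≤ ρ * Nm x)

include hρ0 hsmul hpos hcontr in
lemma step_bound (n : ℕ) (w : Fin d → ℤ) :
    Nm (((companion r) ^ n).mulVec (intToReal (srsTau r w))
        - ((companion r) ^ (n+1)).mulVec (intToReal w)) ≤ ρ ^ n * Nm (digitVec 1) := by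
  have heq : ((companion r) ^ n).mulVec (intToReal (srsTau r w))
      - ((companion r) ^ (n+1)).mulVec (intToReal w)
      = ((companion r) ^ n).mulVec (Int.fract (srsDot r w) • digitVec 1) := by
    rw [← tau_mulVec_diff, Matrix.mulVec_sub, pow_succ, ← Matrix.mulVec_mulVec]
  rw [heq]
  have h1 := hcontr_pow r Nm ρ hρ0 hcontr n (Int.fract (srsDot r w) • digitVec 1)
  have h2 : Nm (Int.fract (srsDot r w) • digitVec 1)
      = |Int.fract (srsDot r w)| * Nm (digitVec 1) := hsmul _ _
  have h3 : |Int.fract (srsDot r w)| ≤ 1 := by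
    rw [abs_of_nonneg (Int.fract_nonneg _)]
    exact (Int.fract_lt_one _).le
  have h4 : 0 ≤ Nm (digitVec (1:ℝ) : Fin d → ℝ) := hpos _
  have h5 : 0 ≤ ρ ^ n := pow_nonneg hρ0 n
  calc Nm (((companion r) ^ n).mulVec (Int.fract (srsDot r w) • digitVec 1))
      ≤ ρ ^ n * Nm (Int.fract (srsDot r w) • digitVec 1) := h1
    _ = ρ ^ n * (|Int.fract (srsDot r w)| * Nm (digitVec 1)) := by rw [h2]
    _ ≤ ρ ^ n * (1 * Nm (digitVec 1)) := by
        apply mul_le_mul_of_nonneg_left _ h5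
        exact mul_le_mul_of_nonneg_right h3 h4
    _ = ρ ^ n * Nm (digitVec 1) := by rw [one_mul]

include hd hρ0 hadd hsmul hpos hcontr in
lemma chain_fwd (hr0 : r ⟨0, hd⟩ ≠ 0) (hr1 : |r ⟨0, hd⟩| ≤ 1) (x : Fin d → ℤ) :
    ∀ (p m : ℕ) (z : Fin d → ℤ), (srsTau r)^[m] z = x →
    ∃ w : Fin d → ℤ, (srsTau r)^[m + p] w = x ∧
      Nm (((companion r) ^ m).mulVec (intToReal z)
          - ((companion r) ^ (m + p)).mulVec (intToReal w))
        ≤ (∑ k ∈ Finset.Ico m (m + p), ρ ^ k) * Nm (digitVec 1) := by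
  intro p
  induction p with
  | zero =>
    intro m z hz
    refine ⟨z, by simpa using hz, ?_⟩
    simp [nm_zero Nm hsmul, Finset.Ico_self]
  | succ p ih =>
    intro m z hz
    obtain ⟨w1, hw1⟩ := tau_preimage hd r hr0 hr1 z
    have hw1x : (srsTau r)^[m + 1] w1 = x := by
      rw [Function.iterate_succ_apply, hw1, hz]
    obtain ⟨w, hwx, hwb⟩ := ih (m + 1) w1 hw1x
    refine ⟨w, by rw [show m + (p + 1) = m + 1 + p by omega]; exact hwx, ?_⟩
    have htri : Nm (((companion r) ^ m).mulVec (intToReal z)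
        - ((companion r) ^ (m + (p + 1))).mulVec (intToReal w))
        ≤ Nm (((companion r) ^ m).mulVec (intToReal z)
            - ((companion r) ^ (m + 1)).mulVec (intToReal w1))
          + Nm (((companion r) ^ (m + 1)).mulVec (intToReal w1)
            - ((companion r) ^ (m + 1 + p)).mulVec (intToReal w)) := by
      rw [show m + (p + 1) = m + 1 + p by omega]
      have := hadd (((companion r) ^ m).mulVec (intToReal z)
            - ((companion r) ^ (m + 1)).mulVec (intToReal w1))
          (((companion r) ^ (m + 1)).mulVec (intToReal w1)
            - ((companion r) ^ (m + 1 + p)).mulVec (intToReal w))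
      simpa using this
    have hstep : Nm (((companion r) ^ m).mulVec (intToReal z)
        - ((companion r) ^ (m + 1)).mulVec (intToReal w1)) ≤ ρ ^ m * Nm (digitVec 1) := by
      rw [← hw1]
      exact step_bound r Nm ρ hρ0 hsmul hpos hcontr m w1
    have hsum : (∑ k ∈ Finset.Ico m (m + (p + 1)), ρ ^ k)
        = ρ ^ m + ∑ k ∈ Finset.Ico (m + 1) (m + 1 + p), ρ ^ k := by
      rw [show m + (p + 1) = m + 1 + p by omega,
        ← Finset.sum_Ico_consecutive (fun k => ρ ^ k) (by omega : m ≤ m + 1)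
          (by omega : m + 1 ≤ m + 1 + p)]
      congr 1
      rw [Nat.Ico_succ_singleton, Finset.sum_singleton]
    rw [hsum, add_mul]
    linarith

include hρ0 hadd hsmul hpos hcontr in
lemma chain_bwd (x : Fin d → ℤ) :
    ∀ (p m : ℕ) (w : Fin d → ℤ), (srsTau r)^[m + p] w = x →
    (srsTau r)^[m] ((srsTau r)^[p] w) = x ∧
      Nm (((companion r) ^ m).mulVec (intToReal ((srsTau r)^[p] w))
          - ((companion r) ^ (m + p)).mulVec (intToReal w))
        ≤ (∑ k ∈ Finset.Ico m (m + p), ρ ^ k) * Nm (digitVec 1) := by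
  intro p
  induction p with
  | zero =>
    intro m w hw
    refine ⟨by simpa using hw, ?_⟩
    simp [nm_zero Nm hsmul, Finset.Ico_self]
  | succ p ih =>
    intro m w hw
    have hw2 : (srsTau r)^[(m + 1) + p] w = x := by
      rw [show (m + 1) + p = m + (p + 1) by omega]; exact hw
    obtain ⟨h1, h2⟩ := ih (m + 1) w hw2
    set u : Fin d → ℤ := (srsTau r)^[p] w with hu
    have hit : (srsTau r)^[p + 1] w = srsTau r u := Function.iterate_succ_apply' _ _ _
    have hmem : (srsTau r)^[m] ((srsTau r)^[p + 1] w) = x := by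
      rw [hit, ← Function.iterate_succ_apply, Function.iterate_succ_apply']
      rw [Function.iterate_succ_apply'] at h1
      exact h1
    refine ⟨hmem, ?_⟩
    have hstep : Nm (((companion r) ^ m).mulVec (intToReal (srsTau r u))
        - ((companion r) ^ (m + 1)).mulVec (intToReal u)) ≤ ρ ^ m * Nm (digitVec 1) :=
      step_bound r Nm ρ hρ0 hsmul hpos hcontr m u
    have htri : Nm (((companion r) ^ m).mulVec (intToReal ((srsTau r)^[p + 1] w))
        - ((companion r) ^ (m + (p + 1))).mulVec (intToReal w))
        ≤ Nm (((companion r) ^ m).mulVec (intToReal (srsTau r u))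
            - ((companion r) ^ (m + 1)).mulVec (intToReal u))
          + Nm (((companion r) ^ (m + 1)).mulVec (intToReal u)
            - ((companion r) ^ ((m + 1) + p)).mulVec (intToReal w)) := by
      rw [hit, show m + (p + 1) = (m + 1) + p by omega]
      have := hadd (((companion r) ^ m).mulVec (intToReal (srsTau r u))
            - ((companion r) ^ (m + 1)).mulVec (intToReal u))
          (((companion r) ^ (m + 1)).mulVec (intToReal u)
            - ((companion r) ^ ((m + 1) + p)).mulVec (intToReal w))
      simpa using this
    have hsum : (∑ k ∈ Finset.Ico m (m + (p + 1)), ρ ^ k)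
        = ρ ^ m + ∑ k ∈ Finset.Ico (m + 1) (m + 1 + p), ρ ^ k := by
      rw [show m + (p + 1) = m + 1 + p by omega,
        ← Finset.sum_Ico_consecutive (fun k => ρ ^ k) (by omega : m ≤ m + 1)
          (by omega : m + 1 ≤ m + 1 + p)]
      congr 1
      rw [Nat.Ico_succ_singleton, Finset.sum_singleton]
    rw [hsum, add_mul]
    linarith
end Main

lemma geom_bd (ρ : ℝ) (hρ0 : 0 ≤ ρ) (hρ : ρ < 1) (m n : ℕ) :
    ∑ k ∈ Finset.Ico m n, ρ ^ k ≤ ρ ^ m * (1 - ρ)⁻¹ := by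
  have h1ρ : (0:ℝ) < 1 - ρ := by linarith
  rcases le_or_gt n m with h | h
  · rw [Finset.Ico_eq_empty (by omega), Finset.sum_empty]
    positivity
  · rw [geom_sum_Ico hρ.ne h.le]
    have heq : (ρ ^ n - ρ ^ m) / (ρ - 1) = (ρ ^ m - ρ ^ n) / (1 - ρ) := by
      rw [div_eq_div_iff (by linarith) (by linarith)]
      ring
    rw [heq, div_eq_mul_inv]
    apply mul_le_mul_of_nonneg_right _ (by positivity)
    have : (0:ℝ) ≤ ρ ^ n := pow_nonneg hρ0 n
    linarith


/-- the Hausdorff distance (w.r.t. the norm Nm) between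
M_r^n τ_r^{-n}(x) and M_r^{n+1} τ_r^{-n-1}(x) is at most ρ̃^n Nm((0,…,0,1)^t);
in particular the sequence of these sets is Cauchy w.r.t. the Hausdorff metric. -/
theorem srs_approx_hausdorff_cauchy (d : ℕ) (hd : 0 < d) (r : Fin d → ℝ)
    (hr0 : r ⟨0, hd⟩ ≠ 0)
    (Nm : (Fin d → ℝ) → ℝ) (ρ : ℝ) (hρ0 : 0 ≤ ρ) (hρ : ρ < 1)
    (hadd : ∀ x y, Nm (x + y) ≤ Nm x + Nm y)
    (hsmul : ∀ (c : ℝ) x, Nm (c • x) = |c| * Nm x)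
    (hpos : ∀ x, 0 ≤ Nm x)
    (hdef : ∀ x, Nm x = 0 → x = 0)
    (hcontr : ∀ x, Nm ((companion r).mulVec x) ≤ ρ * Nm x)
    (x : Fin d → ℤ) :
    (∀ n : ℕ, ∀ a ∈ (fun z => ((companion r) ^ n).mulVec (intToReal z)) ''
        {z : Fin d → ℤ | (srsTau r)^[n] z = x},
      ∃ b ∈ (fun z => ((companion r) ^ (n+1)).mulVec (intToReal z)) ''
          {z : Fin d → ℤ | (srsTau r)^[n+1] z = x},
        Nm (a - b) ≤ ρ ^ n * Nm (digitVec 1)) ∧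
    (∀ n : ℕ, ∀ b ∈ (fun z => ((companion r) ^ (n+1)).mulVec (intToReal z)) ''
        {z : Fin d → ℤ | (srsTau r)^[n+1] z = x},
      ∃ a ∈ (fun z => ((companion r) ^ n).mulVec (intToReal z)) ''
          {z : Fin d → ℤ | (srsTau r)^[n] z = x},
        Nm (a - b) ≤ ρ ^ n * Nm (digitVec 1)) ∧
    (∀ ε > (0:ℝ), ∃ N : ℕ, ∀ m n : ℕ, N ≤ m → N ≤ n →
      ∀ a ∈ (fun z => ((companion r) ^ m).mulVec (intToReal z)) ''
          {z : Fin d → ℤ | (srsTau r)^[m] z = x},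
        ∃ b ∈ (fun z => ((companion r) ^ n).mulVec (intToReal z)) ''
            {z : Fin d → ℤ | (srsTau r)^[n] z = x},
          Nm (a - b) ≤ ε) := by
  have hr1 : |r ⟨0, hd⟩| ≤ 1 := r0_abs_le_one hd r Nm ρ hρ0 hρ hadd hsmul hpos hdef hcontr
  have hD0 : (0:ℝ) ≤ Nm (digitVec 1) := hpos _
  have nm_flip : ∀ u v : Fin d → ℝ, Nm (u - v) = Nm (v - u) := by
    intro u v
    have := hsmul (-1) (v - u)
    simpa [neg_sub] using this
  refine ⟨?_, ?_, ?_⟩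
  · intro n a ha
    obtain ⟨z, hz, rfl⟩ := ha
    obtain ⟨w, hwx, hwb⟩ :=
      chain_fwd hd r Nm ρ hρ0 hadd hsmul hpos hcontr hr0 hr1 x 1 n z hz
    refine ⟨_, ⟨w, hwx, rfl⟩, ?_⟩
    have hsum : (∑ k ∈ Finset.Ico n (n + 1), ρ ^ k) = ρ ^ n := by
      rw [Nat.Ico_succ_singleton, Finset.sum_singleton]
    rw [hsum] at hwb
    exact hwb
  · intro n b hb
    obtain ⟨w, hw, rfl⟩ := hb
    obtain ⟨h1, h2⟩ := chain_bwd r Nm ρ hρ0 hadd hsmul hpos hcontr x 1 n w hw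
    refine ⟨_, ⟨(srsTau r)^[1] w, h1, rfl⟩, ?_⟩
    have hsum : (∑ k ∈ Finset.Ico n (n + 1), ρ ^ k) = ρ ^ n := by
      rw [Nat.Ico_succ_singleton, Finset.sum_singleton]
    rw [hsum] at h2
    exact h2
  · intro ε hε
    set D : ℝ := Nm (digitVec 1) with hD
    set Q : ℝ := (1 - ρ)⁻¹ * D + 1 with hQ
    have h1ρ : (0:ℝ) < 1 - ρ := by linarith
    have hQ1 : (0:ℝ) < Q := by
      have h : (0:ℝ) ≤ (1 - ρ)⁻¹ * D := mul_nonneg (by positivity) hD0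
      rw [hQ]
      linarith
    obtain ⟨N, hN⟩ := exists_pow_lt_of_lt_one (div_pos hε hQ1) hρ
    refine ⟨N, ?_⟩
    have key : ∀ s t : ℕ, N ≤ s → (∑ k ∈ Finset.Ico s t, ρ ^ k) * D ≤ ε := by
      intro s t hs
      have h1 : (∑ k ∈ Finset.Ico s t, ρ ^ k) ≤ ρ ^ s * (1 - ρ)⁻¹ :=
        geom_bd ρ hρ0 hρ s t
      have h2 : ρ ^ s ≤ ρ ^ N := pow_le_pow_of_le_one hρ0 hρ.le hs
      have h3 : (∑ k ∈ Finset.Ico s t, ρ ^ k) * D ≤ ρ ^ N * ((1 - ρ)⁻¹ * D) := by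
        calc (∑ k ∈ Finset.Ico s t, ρ ^ k) * D ≤ (ρ ^ s * (1 - ρ)⁻¹) * D :=
              mul_le_mul_of_nonneg_right h1 hD0
          _ ≤ (ρ ^ N * (1 - ρ)⁻¹) * D := by
              apply mul_le_mul_of_nonneg_right _ hD0
              exact mul_le_mul_of_nonneg_right h2 (by positivity)
          _ = ρ ^ N * ((1 - ρ)⁻¹ * D) := by ring
      have h4 : ρ ^ N * ((1 - ρ)⁻¹ * D) ≤ (ε / Q) * Q := by
        calc ρ ^ N * ((1 - ρ)⁻¹ * D) ≤ (ε / Q) * ((1 - ρ)⁻¹ * D) := by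
              apply mul_le_mul_of_nonneg_right hN.le
              exact mul_nonneg (by positivity) hD0
          _ ≤ (ε / Q) * Q := by
              apply mul_le_mul_of_nonneg_left _ (le_of_lt (div_pos hε hQ1))
              rw [hQ]; linarith
      have h5 : (ε / Q) * Q = ε := div_mul_cancel₀ ε hQ1.ne'
      linarith
    intro m n hm hn a ha
    obtain ⟨z, hz, rfl⟩ := ha
    rcases le_total m n with hmn | hnm
    · obtain ⟨w, hwx, hwb⟩ :=
        chain_fwd hd r Nm ρ hρ0 hadd hsmul hpos hcontr hr0 hr1 x (n - m) m z hz
      rw [show m + (n - m) = n by omega] at hwx hwb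
      exact ⟨_, ⟨w, hwx, rfl⟩, le_trans hwb (key m n hm)⟩
    · have hz2 : (srsTau r)^[n + (m - n)] z = x := by
        rw [show n + (m - n) = m by omega]; exact hz
      obtain ⟨h1, h2⟩ := chain_bwd r Nm ρ hρ0 hadd hsmul hpos hcontr x (m - n) n z hz2
      rw [show n + (m - n) = m by omega] at h2
      refine ⟨_, ⟨(srsTau r)^[m - n] z, h1, rfl⟩, ?_⟩
      rw [nm_flip]
      exact le_trans h2 (key n m hn)
end
end

section
/- Let r ∈ int(D_d) be reduced. A point t ∈ ℝ^d belongs to the SRS tile T_r(x) if and only if there exist numbers v_{-j} ∈ [0,1) for j ∈ ℕ such that t = x - Σ_{j=0}^∞ M_r^j (0,...,0,v_{-j})^t and M_r^{-n}(x - Σ_{j=0}^{n-1} M_r^j (0,...,0,v_{-j})^t) ∈ ℤ^d for all n ∈ ℕ. -/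
open Matrix Filter

noncomputable section

namespace SRSAux

/-- mulVec of a sum -/
lemma mulVec_sum {d : ℕ} (A : Matrix (Fin d) (Fin d) ℝ) (s : Finset ℕ) (f : ℕ → Fin d → ℝ) :
    A.mulVec (∑ i ∈ s, f i) = ∑ i ∈ s, A.mulVec (f i) :=
  map_sum A.mulVecLin f s

variable {m : ℕ} (r : Fin (m + 1) → ℝ)

lemma tau_real (z : Fin (m + 1) → ℤ) :
    intToReal (srsTau r z)
      = (companion r).mulVec (intToReal z) + digitVec (Int.fract (srsDot r z)) := by
  funext i
  by_cases h : (i : ℕ) + 1 < m + 1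
  · have hd : ((i : ℕ) + 1 = m + 1) = False := by simp; omega
    simp only [intToReal, srsTau, companion, digitVec, Pi.add_apply, h, dif_pos, if_pos,
      hd, if_false, eq_self_iff_true, add_zero, Matrix.mulVec, dotProduct]
    rw [Finset.sum_eq_single (⟨(i : ℕ) + 1, h⟩ : Fin (m + 1))]
    · simp
    · intro b _ hb
      have : ((b : ℕ) = (i : ℕ) + 1) = False := by
        simp only [eq_iff_iff, iff_false]
        intro hb'; exact hb (Fin.ext hb')
      simp [this]
    · simp
  · have hlast : (i : ℕ) + 1 = m + 1 := by omega
    simp only [intToReal, srsTau, companion, digitVec, Pi.add_apply, Matrix.mulVec,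
      dotProduct, hlast, lt_irrefl, dif_neg, not_false_iff, if_neg, if_true, if_pos,
      eq_self_iff_true]
    have : ∑ x, -r x * ((z x : ℝ)) = -srsDot r z := by
      simp [srsDot, neg_mul]
    rw [this, Int.fract]
    push_cast
    ring

/-- Iterate expansion with digits in [0,1). -/
lemma iterate_expand (k : ℕ) (z : Fin (m + 1) → ℤ) :
    ∃ e : ℕ → ℝ, (∀ j, e j ∈ Set.Ico (0:ℝ) 1) ∧
      intToReal ((srsTau r)^[k] z)
        = ((companion r) ^ k).mulVec (intToReal z)
          + ∑ j ∈ Finset.range k, ((companion r) ^ j).mulVec (digitVec (e j)) := by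
  induction k with
  | zero =>
      exact ⟨fun _ => 0, fun _ => by constructor <;> norm_num, by
        simp [Matrix.one_mulVec]⟩
  | succ k ih =>
      obtain ⟨e, he, hid⟩ := ih
      refine ⟨fun j => Nat.rec (Int.fract (srsDot r ((srsTau r)^[k] z))) (fun j _ => e j) j,
        ?_, ?_⟩
      · intro j
        cases j with
        | zero => exact ⟨Int.fract_nonneg _, Int.fract_lt_one _⟩
        | succ j => exact he j
      · rw [Function.iterate_succ_apply', tau_real, hid, Matrix.mulVec_add,
          Matrix.mulVec_mulVec, ← pow_succ', mulVec_sum, Finset.sum_range_succ']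
        simp only [Matrix.mulVec_mulVec, ← pow_succ']
        simp only [pow_zero, Matrix.one_mulVec]
        abel

/-- Chain telescope. -/
lemma chain_telescope (w : ℕ → Fin (m + 1) → ℤ) (hw : ∀ n, srsTau r (w (n + 1)) = w n)
    (n : ℕ) :
    intToReal (w 0)
      = ((companion r) ^ n).mulVec (intToReal (w n))
        + ∑ j ∈ Finset.range n,
            ((companion r) ^ j).mulVec (digitVec (Int.fract (srsDot r (w (j + 1))))) := by
  induction n with
  | zero => simp [Matrix.one_mulVec]
  | succ n ih =>
      rw [ih]
      have h1 : intToReal (w n)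
          = (companion r).mulVec (intToReal (w (n + 1)))
            + digitVec (Int.fract (srsDot r (w (n + 1)))) := by
        rw [← hw n, tau_real]
      rw [h1, Matrix.mulVec_add, Matrix.mulVec_mulVec, ← pow_succ,
        Finset.sum_range_succ]
      abel

lemma companion_mulVec_apply (u : Fin (m + 1) → ℝ) (i : Fin (m + 1)) :
    (companion r).mulVec u i
      = if h : (i : ℕ) + 1 < m + 1 then u ⟨(i : ℕ) + 1, h⟩ else -∑ j, r j * u j := by
  by_cases h : (i : ℕ) + 1 < m + 1
  · rw [dif_pos h]
    simp only [companion, Matrix.mulVec, dotProduct, if_pos h]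
    rw [Finset.sum_eq_single (⟨(i : ℕ) + 1, h⟩ : Fin (m + 1))]
    · simp
    · intro b _ hb
      have : ((b : ℕ) = (i : ℕ) + 1) = False := by
        simp only [eq_iff_iff, iff_false]
        intro hb'; exact hb (Fin.ext hb')
      simp [this]
    · simp
  · rw [dif_neg h]
    simp only [companion, Matrix.mulVec, dotProduct, if_neg h]
    simp [neg_mul, Finset.sum_neg_distrib]

lemma companion_mulVec_injective (hr0 : r 0 ≠ 0) :
    Function.Injective (companion r).mulVec := by
  intro u u' huu
  have hsucc : ∀ k : Fin m, u k.succ = u' k.succ := by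
    intro k
    have h1 := congrFun huu k.castSucc
    have hk : ((k.castSucc : ℕ)) + 1 < m + 1 := by
      simpa using Nat.succ_lt_succ k.isLt
    rw [companion_mulVec_apply, companion_mulVec_apply, dif_pos hk, dif_pos hk] at h1
    have : (⟨((k.castSucc : ℕ)) + 1, hk⟩ : Fin (m + 1)) = k.succ := by
      apply Fin.ext; simp
    rwa [this] at h1
  have h0 : u 0 = u' 0 := by
    have h1 := congrFun huu (Fin.last m)
    have hk : ¬ ((Fin.last m : ℕ)) + 1 < m + 1 := by simp
    rw [companion_mulVec_apply, companion_mulVec_apply, dif_neg hk, dif_neg hk,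
      neg_inj, Fin.sum_univ_succ, Fin.sum_univ_succ] at h1
    have h2 : ∑ j : Fin m, r j.succ * u j.succ = ∑ j : Fin m, r j.succ * u' j.succ := by
      apply Finset.sum_congr rfl; intro j _; rw [hsucc j]
    rw [h2, add_right_cancel_iff] at h1
    exact mul_left_cancel₀ hr0 h1
  funext i
  induction i using Fin.cases with
  | zero => exact h0
  | succ k => exact hsucc k

lemma companion_isUnit_det (hr0 : r 0 ≠ 0) : IsUnit (companion r).det := by
  have := (Matrix.mulVec_injective_iff_isUnit).1 (companion_mulVec_injective r hr0)
  exact (Matrix.isUnit_iff_isUnit_det _).1 this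

lemma freq_pigeonhole {α β : Type*} {l : Filter β} {s : Set α} (hs : s.Finite)
    {f : β → α} (h : ∃ᶠ n in l, f n ∈ s) : ∃ a ∈ s, ∃ᶠ n in l, f n = a := by
  by_contra hcon
  push_neg at hcon
  have hev : ∀ᶠ n in l, ∀ a ∈ s, f n ≠ a :=
    (eventually_all_finite hs).2 fun a ha => (hcon a ha)
  obtain ⟨n, hn1, hn2⟩ := (h.and_eventually hev).exists
  exact hn2 _ hn1 rfl

lemma exists_chain {α : Type*} (P : ℕ → α → Prop) (f : α → α) (x : α) (h0 : P 0 x)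
    (hstep : ∀ n w, P n w → ∃ w', f w' = w ∧ P (n + 1) w') :
    ∃ c : ℕ → α, c 0 = x ∧ (∀ n, f (c (n + 1)) = c n) ∧ ∀ n, P n (c n) := by
  choose g hg1 hg2 using hstep
  let c' : ∀ n : ℕ, {w : α // P n w} := fun n =>
    Nat.rec ⟨x, h0⟩ (fun n ih => ⟨g n ih.1 ih.2, hg2 n ih.1 ih.2⟩) n
  exact ⟨fun n => (c' n).1, rfl, fun n => hg1 n (c' n).1 (c' n).2, fun n => (c' n).2⟩

lemma frequently_succ {Q : ℕ → Prop} (h : ∃ᶠ n in atTop, Q n) :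
    ∃ᶠ n in atTop, Q (n + 1) := by
  rw [frequently_atTop] at h ⊢
  intro a
  obtain ⟨b, hb, hQ⟩ := h (a + 1)
  obtain ⟨c, rfl⟩ : ∃ c, b = c + 1 := ⟨b - 1, by omega⟩
  exact ⟨c, by omega, hQ⟩

lemma tau_preimage_finite (hr0 : r 0 ≠ 0) (w : Fin (m + 1) → ℤ) :
    {z : Fin (m + 1) → ℤ | srsTau r z = w}.Finite := by
  set S := {z : Fin (m + 1) → ℤ | srsTau r z = w} with hS
  have key : ∀ z ∈ S, ∀ k : Fin m, z k.succ = w k.castSucc := by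
    intro z hz k
    have h1 := congrFun hz k.castSucc
    have hk : ((k.castSucc : ℕ)) + 1 < m + 1 := by simpa using Nat.succ_lt_succ k.isLt
    rw [srsTau] at h1
    simp only [dif_pos hk] at h1
    rw [← h1]
    congr 1
  have keyfloor : ∀ z ∈ S, ⌊srsDot r z⌋ = -(w (Fin.last m)) := by
    intro z hz
    have h1 := congrFun hz (Fin.last m)
    have hk : ¬ ((Fin.last m : ℕ)) + 1 < m + 1 := by simp
    rw [srsTau] at h1
    simp only [dif_neg hk] at h1
    omega
  set R := ∑ k : Fin m, r k.succ * ((w k.castSucc : ℝ)) with hR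
  set A := ((-(w (Fin.last m)) : ℤ) : ℝ) - R with hA
  set B := (|A| + 1) / |r 0| with hB
  have habs : ∀ z ∈ S, |((z 0 : ℤ) : ℝ)| ≤ B := by
    intro z hz
    have hdot : srsDot r z = r 0 * ((z 0 : ℤ) : ℝ) + R := by
      rw [srsDot, Fin.sum_univ_succ]
      congr 1
      apply Finset.sum_congr rfl
      intro k _
      rw [key z hz k]
    have hfl := keyfloor z hz
    rw [Int.floor_eq_iff] at hfl
    have h1 : A ≤ r 0 * ((z 0 : ℤ) : ℝ) := by
      have := hfl.1; rw [hdot] at this; simp only [hA]; linarith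
    have h2 : r 0 * ((z 0 : ℤ) : ℝ) < A + 1 := by
      have := hfl.2; rw [hdot] at this; simp only [hA]; push_cast at this ⊢; linarith
    have h3 : |r 0 * ((z 0 : ℤ) : ℝ)| ≤ |A| + 1 := by
      rw [abs_le]
      constructor
      · have := neg_abs_le A; linarith
      · have := le_abs_self A; linarith
    rw [abs_mul] at h3
    have hr0' : (0:ℝ) < |r 0| := abs_pos.2 hr0
    rw [hB, le_div_iff₀ hr0']
    calc |((z 0 : ℤ) : ℝ)| * |r 0| = |r 0| * |((z 0 : ℤ) : ℝ)| := by ring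
    _ ≤ |A| + 1 := h3
  apply Set.Finite.of_finite_image (f := fun z => z 0)
  · apply Set.Finite.subset (Set.finite_Icc (-⌈B⌉) ⌈B⌉)
    rintro _ ⟨z, hz, rfl⟩
    have h1 := habs z hz
    rw [abs_le] at h1
    have hc := Int.le_ceil B
    constructor
    · have : ((-⌈B⌉ : ℤ) : ℝ) ≤ ((z 0 : ℤ) : ℝ) := by push_cast; linarith
      exact_mod_cast this
    · have : ((z 0 : ℤ) : ℝ) ≤ ((⌈B⌉ : ℤ) : ℝ) := by push_cast; linarith
      exact_mod_cast this
  · intro z hz z' hz' h0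
    funext i
    induction i using Fin.cases with
    | zero => exact h0
    | succ k => rw [key z hz k, key z' hz' k]

end SRSAux



/-- t ∈ T_r(x) iff there are v_{-j} ∈ [0,1) with
t = x - Σ_{j≥0} M_r^j (0,…,0,v_{-j})^t and
M_r^{-n}(x - Σ_{j<n} M_r^j (0,…,0,v_{-j})^t) ∈ ℤ^d for all n. -/
theorem mem_srsTile_iff (d : ℕ) (hd : 0 < d) (r : Fin d → ℝ)
    (hr0 : r ⟨0, hd⟩ ≠ 0) (hcontr : srsContractive r)
    (x : Fin d → ℤ) (t : Fin d → ℝ) :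
    t ∈ srsTile r x ↔
      ∃ v : ℕ → ℝ, (∀ j, v j ∈ Set.Ico (0:ℝ) 1) ∧
        t = intToReal x - ∑' j : ℕ, ((companion r) ^ j).mulVec (digitVec (v j)) ∧
        ∀ n : ℕ, ∃ w : Fin d → ℤ, intToReal w =
          (((companion r)⁻¹) ^ n).mulVec
            (intToReal x -
              ∑ j ∈ Finset.range n, ((companion r) ^ j).mulVec (digitVec (v j))) := by
  obtain ⟨m, rfl⟩ : ∃ m, d = m + 1 := ⟨d - 1, by omega⟩
  have hr0' : r 0 ≠ 0 := by
    have e : (⟨0, hd⟩ : Fin (m + 1)) = 0 := Fin.ext (by simp)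
    rwa [e] at hr0
  obtain ⟨C, hC, ρ, hρ0, hρ1, hbound⟩ := hcontr
  set M := companion r with hM
  -- invertibility facts
  have hdet : IsUnit M.det := SRSAux.companion_isUnit_det r hr0'
  have hNM : M⁻¹ * M = 1 := Matrix.nonsing_inv_mul M hdet
  have hMN : M * M⁻¹ = 1 := Matrix.mul_nonsing_inv M hdet
  have hcomm : Commute M⁻¹ M := by unfold Commute SemiconjBy; rw [hNM, hMN]
  have hNMn : ∀ n : ℕ, (M⁻¹) ^ n * M ^ n = 1 := fun n => by
    rw [← hcomm.mul_pow, hNM, one_pow]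
  have hMNn : ∀ n : ℕ, M ^ n * (M⁻¹) ^ n = 1 := fun n => by
    rw [← hcomm.symm.mul_pow, hMN, one_pow]
  -- digit norm facts
  have hdig : ∀ v : ℝ, v ∈ Set.Ico (0:ℝ) 1 → ‖(digitVec v : Fin (m + 1) → ℝ)‖ ≤ 1 := by
    intro v hv
    rw [pi_norm_le_iff_of_nonneg zero_le_one]
    intro i
    simp only [digitVec]
    split
    · rw [Real.norm_eq_abs, abs_of_nonneg hv.1]; linarith [hv.2]
    · simp
  have hterm : ∀ v : ℝ, v ∈ Set.Ico (0:ℝ) 1 → ∀ j : ℕ,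
      ‖(M ^ j).mulVec (digitVec v)‖ ≤ C * ρ ^ j := by
    intro v hv j
    calc ‖(M ^ j).mulVec (digitVec v)‖ ≤ C * ρ ^ j * ‖(digitVec v : Fin (m+1) → ℝ)‖ :=
          hbound j _
    _ ≤ C * ρ ^ j * 1 := by
        apply mul_le_mul_of_nonneg_left (hdig v hv); positivity
    _ = C * ρ ^ j := mul_one _
  have hsummable : ∀ e : ℕ → ℝ, (∀ j, e j ∈ Set.Ico (0:ℝ) 1) →
      Summable (fun j => (M ^ j).mulVec (digitVec (e j)) : ℕ → Fin (m+1) → ℝ) := by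
    intro e he
    exact Summable.of_norm_bounded
      ((summable_geometric_of_lt_one hρ0 hρ1).mul_left C) (fun j => hterm (e j) (he j) j)
  have hgeom : ∀ n : ℕ, ∑ j ∈ Finset.range n, ρ ^ j ≤ (1 - ρ)⁻¹ := by
    intro n
    rw [← tsum_geometric_of_lt_one hρ0 hρ1]
    exact Summable.sum_le_tsum _ (fun i _ => pow_nonneg hρ0 i) (summable_geometric_of_lt_one hρ0 hρ1)
  have hsum_bound : ∀ e : ℕ → ℝ, (∀ j, e j ∈ Set.Ico (0:ℝ) 1) → ∀ (M0 k : ℕ),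
      ‖∑ j ∈ Finset.range k, (M ^ (M0 + j)).mulVec (digitVec (e j))‖
        ≤ C * ρ ^ M0 * (1 - ρ)⁻¹ := by
    intro e he M0 k
    calc ‖∑ j ∈ Finset.range k, (M ^ (M0 + j)).mulVec (digitVec (e j))‖
        ≤ ∑ j ∈ Finset.range k, ‖(M ^ (M0 + j)).mulVec (digitVec (e j))‖ :=
          norm_sum_le _ _
    _ ≤ ∑ j ∈ Finset.range k, C * ρ ^ (M0 + j) := by
        apply Finset.sum_le_sum
        intro j _
        exact hterm (e j) (he j) (M0 + j)
    _ = C * ρ ^ M0 * ∑ j ∈ Finset.range k, ρ ^ j := by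
        rw [Finset.mul_sum]
        apply Finset.sum_congr rfl
        intro j _
        rw [pow_add]; ring
    _ ≤ C * ρ ^ M0 * (1 - ρ)⁻¹ := by
        apply mul_le_mul_of_nonneg_left (hgeom k); positivity
  constructor
  · -- forward direction
    rintro ⟨z, hz, hlim⟩
    set P : ℕ → (Fin (m + 1) → ℤ) → Prop :=
      fun n w => ∃ᶠ k in atTop, (srsTau r)^[k] (z (k + n)) = w with hP
    have h0 : P 0 x := Frequently.of_forall (fun k => by simpa using hz k)
    have hstep : ∀ n w, P n w → ∃ w', srsTau r w' = w ∧ P (n + 1) w' := by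
      intro n w hw
      have h1 : ∃ᶠ k in atTop, srsTau r ((srsTau r)^[k] (z (k + (n + 1)))) = w := by
        have h2 := SRSAux.frequently_succ hw
        apply h2.mono
        intro k hk
        rw [Function.iterate_succ_apply'] at hk
        have e : k + (n + 1) = k + 1 + n := by omega
        rw [e]
        exact hk
      obtain ⟨w', hw', hfreq⟩ :=
        SRSAux.freq_pigeonhole (SRSAux.tau_preimage_finite r hr0' w) h1
      exact ⟨w', hw', hfreq⟩
    obtain ⟨c, hc0, hcstep, hcP⟩ := SRSAux.exists_chain P (srsTau r) x h0 hstep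
    set v : ℕ → ℝ := fun j => Int.fract (srsDot r (c (j + 1))) with hv_def
    have hv : ∀ j, v j ∈ Set.Ico (0:ℝ) 1 :=
      fun j => ⟨Int.fract_nonneg _, Int.fract_lt_one _⟩
    have htel : ∀ n, intToReal x = (M ^ n).mulVec (intToReal (c n))
        + ∑ j ∈ Finset.range n, (M ^ j).mulVec (digitVec (v j)) := by
      intro n
      rw [← hc0]
      exact SRSAux.chain_telescope r c hcstep n
    -- limit of M^n c n is t
    have hMn_t : ∀ n, ‖(M ^ n).mulVec (intToReal (c n)) - t‖ ≤ C * ρ ^ n * (1 - ρ)⁻¹ := by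
      intro n
      apply le_of_forall_pos_le_add
      intro ε hε
      obtain ⟨N, hN⟩ := (Metric.tendsto_atTop.1 hlim) ε hε
      obtain ⟨k, hkN, hk⟩ := Filter.frequently_atTop.1 (hcP n) N
      obtain ⟨e, he, hexp⟩ := SRSAux.iterate_expand r k (z (k + n))
      have hkey : (M ^ n).mulVec (intToReal (c n))
          = (M ^ (k + n)).mulVec (intToReal (z (k + n)))
            + ∑ j ∈ Finset.range k, (M ^ (n + j)).mulVec (digitVec (e j)) := by
        rw [← hk, hexp, Matrix.mulVec_add, Matrix.mulVec_mulVec, ← pow_add,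
          SRSAux.mulVec_sum]
        congr 1
        · rw [Nat.add_comm n k]
        · apply Finset.sum_congr rfl
          intro j _
          rw [Matrix.mulVec_mulVec, ← pow_add]
      have hdist := hN (k + n) (le_trans hkN (Nat.le_add_right k n))
      rw [dist_eq_norm] at hdist
      calc ‖(M ^ n).mulVec (intToReal (c n)) - t‖
          = ‖((M ^ (k + n)).mulVec (intToReal (z (k + n))) - t)
              + ∑ j ∈ Finset.range k, (M ^ (n + j)).mulVec (digitVec (e j))‖ := by
            rw [hkey]; congr 1; abel
      _ ≤ ‖(M ^ (k + n)).mulVec (intToReal (z (k + n))) - t‖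
            + ‖∑ j ∈ Finset.range k, (M ^ (n + j)).mulVec (digitVec (e j))‖ :=
            norm_add_le _ _
      _ ≤ ε + C * ρ ^ n * (1 - ρ)⁻¹ := by
            apply add_le_add (le_of_lt hdist) (hsum_bound e he n k)
      _ = C * ρ ^ n * (1 - ρ)⁻¹ + ε := by ring
    have hMn_tendsto : Tendsto (fun n => (M ^ n).mulVec (intToReal (c n))) atTop (nhds t) := by
      have h1 : Tendsto (fun n => (M ^ n).mulVec (intToReal (c n)) - t) atTop (nhds 0) := by
        apply squeeze_zero_norm hMn_t
        simpa using ((tendsto_pow_atTop_nhds_zero_of_lt_one hρ0 hρ1).const_mul C).mul_const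
          (1 - ρ)⁻¹
      have h2 := h1.add (tendsto_const_nhds (x := t))
      simpa using h2
    refine ⟨v, hv, ?_, ?_⟩
    · -- t = x - tsum
      have hps := (hsummable v hv).hasSum.tendsto_sum_nat
      have h3 : Tendsto (fun n => (M ^ n).mulVec (intToReal (c n))
          + ∑ j ∈ Finset.range n, (M ^ j).mulVec (digitVec (v j))) atTop
          (nhds (t + ∑' j : ℕ, (M ^ j).mulVec (digitVec (v j)))) :=
        hMn_tendsto.add hps
      have h4 : Tendsto (fun _ : ℕ => intToReal x) atTop
          (nhds (t + ∑' j : ℕ, (M ^ j).mulVec (digitVec (v j)))) := by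
        have e : (fun _ : ℕ => intToReal x) = fun n => (M ^ n).mulVec (intToReal (c n))
            + ∑ j ∈ Finset.range n, (M ^ j).mulVec (digitVec (v j)) :=
          funext fun n => htel n
        rw [e]; exact h3
      have h5 := tendsto_nhds_unique h4 tendsto_const_nhds
      rw [eq_sub_iff_add_eq]
      exact h5
    · -- integrality
      intro n
      refine ⟨c n, ?_⟩
      have h6 : intToReal x - ∑ j ∈ Finset.range n, (M ^ j).mulVec (digitVec (v j))
          = (M ^ n).mulVec (intToReal (c n)) := by
        rw [htel n]; abel
      rw [h6, Matrix.mulVec_mulVec, hNMn n, Matrix.one_mulVec]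
  · -- converse direction
    rintro ⟨v, hv, ht, hw⟩
    choose w hwspec using hw
    have hMw : ∀ n, (M ^ n).mulVec (intToReal (w n))
        = intToReal x - ∑ j ∈ Finset.range n, (M ^ j).mulVec (digitVec (v j)) := by
      intro n
      rw [hwspec n, Matrix.mulVec_mulVec, hMNn n, Matrix.one_mulVec]
    have hw0 : w 0 = x := by
      have h := hMw 0
      rw [pow_zero, Matrix.one_mulVec] at h
      simp only [Finset.range_zero, Finset.sum_empty, sub_zero] at h
      funext i
      have h2 := congrFun h i
      simp only [intToReal] at h2
      exact_mod_cast h2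
    have hstep : ∀ n, srsTau r (w (n + 1)) = w n := by
      intro n
      have hvec : M.mulVec (intToReal (w (n + 1))) = intToReal (w n) - digitVec (v n) := by
        have h1 := hMw (n + 1)
        rw [Finset.sum_range_succ] at h1
        have h2 : (M ^ (n+1)).mulVec (intToReal (w (n+1)))
            = (M ^ n).mulVec (intToReal (w n)) - (M ^ n).mulVec (digitVec (v n)) := by
          rw [h1, hMw n]; abel
        have h3 := congrArg (((M⁻¹) ^ n).mulVec) h2
        rw [Matrix.mulVec_sub, Matrix.mulVec_mulVec, Matrix.mulVec_mulVec,
          Matrix.mulVec_mulVec, hNMn n, Matrix.one_mulVec, Matrix.one_mulVec] at h3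
        have h4 : (M⁻¹) ^ n * M ^ (n + 1) = M := by
          rw [pow_succ, ← Matrix.mul_assoc, hNMn n, Matrix.one_mul]
        rw [h4] at h3
        exact h3
      funext i
      by_cases h : (i : ℕ) + 1 < m + 1
      · rw [srsTau]
        simp only [dif_pos h]
        have hcomp := congrFun hvec i
        rw [SRSAux.companion_mulVec_apply] at hcomp
        simp only [dif_pos h] at hcomp
        have hdig0 : ¬ ((i : ℕ) + 1 = m + 1) := by omega
        simp only [Pi.sub_apply, digitVec, hdig0, if_false, sub_zero, intToReal] at hcomp
        exact_mod_cast hcomp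
      · have hlast : (i : ℕ) + 1 = m + 1 := by have := i.isLt; omega
        rw [srsTau]
        simp only [dif_neg h]
        have hcomp := congrFun hvec i
        rw [SRSAux.companion_mulVec_apply] at hcomp
        simp only [dif_neg h] at hcomp
        have hds : ∑ j, r j * (intToReal (w (n + 1)) j) = srsDot r (w (n + 1)) := by
          simp [srsDot, intToReal]
        rw [hds] at hcomp
        simp only [Pi.sub_apply, digitVec, hlast, if_pos, intToReal] at hcomp
        have hfloor : ⌊srsDot r (w (n + 1))⌋ = -(w n i) := by
          rw [Int.floor_eq_iff]
          have hvn := hv n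
          constructor
          · push_cast
            linarith [hvn.1]
          · push_cast
            linarith [hvn.2]
        rw [hfloor]
        ring
    have hiter : ∀ n, (srsTau r)^[n] (w n) = x := by
      intro n
      induction n with
      | zero => simpa using hw0
      | succ n ih =>
          rw [Function.iterate_succ_apply, hstep n]
          exact ih
    refine ⟨w, hiter, ?_⟩
    have hps := (hsummable v hv).hasSum.tendsto_sum_nat
    have h1 : Tendsto (fun n => intToReal x
        - ∑ j ∈ Finset.range n, (M ^ j).mulVec (digitVec (v j))) atTop
        (nhds (intToReal x - ∑' j : ℕ, (M ^ j).mulVec (digitVec (v j)))) :=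
      (tendsto_const_nhds (x := intToReal x)).sub hps
    rw [← ht] at h1
    have e : (fun n => (M ^ n).mulVec (intToReal (w n)))
        = fun n => intToReal x - ∑ j ∈ Finset.range n, (M ^ j).mulVec (digitVec (v j)) :=
      funext fun n => hMw n
    rw [e]
    exact h1
end
end

section
/- Let r ∈ int(D_d) be reduced. Then the family of SRS tiles {T_r(x) : x ∈ ℤ^d} covers ℝ^d, i.e., ⋃_{x ∈ ℤ^d} T_r(x) = ℝ^d. -/
open Matrix Filter

noncomputable section

-- Lemma A : one step
lemma srsTau_step {d : ℕ} (r : Fin d → ℝ) (z : Fin d → ℤ) :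
    intToReal (srsTau r z)
      = (companion r).mulVec (intToReal z) + digitVec (Int.fract (srsDot r z)) := by
  funext i
  simp only [intToReal, srsTau, Pi.add_apply, Matrix.mulVec, dotProduct, companion, digitVec]
  by_cases h : (i : ℕ) + 1 < d
  · rw [dif_pos h]
    have : ∀ j : Fin d, (if (j : ℕ) = (i : ℕ) + 1 then (1:ℝ) else 0) * (z j : ℝ)
        = if j = (⟨(i:ℕ)+1, h⟩ : Fin d) then (z j : ℝ) else 0 := by
      intro j
      by_cases hj : (j : ℕ) = (i : ℕ) + 1
      · rw [if_pos hj, if_pos (Fin.ext hj), one_mul]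
      · rw [if_neg hj, if_neg (fun hc => hj (by rw [hc])), zero_mul]
    simp only [if_pos h, this, Finset.sum_ite_eq' Finset.univ, Finset.mem_univ, if_true,
      Nat.succ_ne_self]
    have : ¬ ((i : ℕ) + 1 = d) := Nat.ne_of_lt h
    rw [if_neg this, add_zero]
  · rw [dif_neg h]
    have hid : (i : ℕ) + 1 = d := Nat.le_antisymm i.isLt (not_lt.mp h)
    simp only [if_neg h, if_pos hid, Int.fract]
    have : ∑ j, -r j * (z j : ℝ) = -srsDot r z := by
      simp [srsDot, neg_mul, Finset.sum_neg_distrib]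
    rw [this]
    push_cast
    ring

-- Lemma B : iterate expansion
lemma srsTau_iterate {d : ℕ} (r : Fin d → ℝ) (z : Fin d → ℤ) (k : ℕ) :
    intToReal ((srsTau r)^[k] z)
      = ((companion r) ^ k).mulVec (intToReal z)
        + ∑ j ∈ Finset.range k,
            ((companion r) ^ (k - 1 - j)).mulVec
              (digitVec (Int.fract (srsDot r ((srsTau r)^[j] z)))) := by
  induction k with
  | zero => simp [Matrix.one_mulVec]
  | succ k ih =>
    rw [Function.iterate_succ_apply', srsTau_step, ih, Finset.sum_range_succ]
    simp only [Nat.succ_sub_one, Nat.sub_self, pow_zero, Matrix.one_mulVec]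
    rw [Matrix.mulVec_add, add_assoc]
    congr 1
    · rw [Matrix.mulVec_mulVec, ← pow_succ']
    congr 1
    rw [show (companion r).mulVec (∑ j ∈ Finset.range k,
        ((companion r) ^ (k - 1 - j)).mulVec
          (digitVec (Int.fract (srsDot r ((srsTau r)^[j] z)))))
      = ∑ j ∈ Finset.range k, (companion r).mulVec (((companion r) ^ (k - 1 - j)).mulVec
          (digitVec (Int.fract (srsDot r ((srsTau r)^[j] z)))))
      from map_sum (Matrix.mulVecLin (companion r)) _ _]
    refine Finset.sum_congr rfl (fun j hj => ?_)
    rw [Matrix.mulVec_mulVec, ← pow_succ']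
    have : k - 1 - j + 1 = k - j := by
      have := Finset.mem_range.mp hj; omega
    rw [this]

lemma norm_digitVec_fract {d : ℕ} (a : ℝ) : ‖(digitVec (Int.fract a) : Fin d → ℝ)‖ ≤ 1 := by
  rw [pi_norm_le_iff_of_nonneg zero_le_one]
  intro i
  simp only [digitVec]
  split
  · rw [Real.norm_eq_abs, abs_of_nonneg (Int.fract_nonneg a)]
    exact (Int.fract_lt_one a).le
  · simp

lemma geom_sum_le_inv {ρ : ℝ} (h0 : 0 ≤ ρ) (h1 : ρ < 1) (k : ℕ) :
    ∑ i ∈ Finset.range k, ρ ^ i ≤ (1 - ρ)⁻¹ := by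
  calc ∑ i ∈ Finset.range k, ρ ^ i ≤ ∑' i : ℕ, ρ ^ i :=
        Summable.sum_le_tsum _ (fun i _ => pow_nonneg h0 i) (summable_geometric_of_lt_one h0 h1)
    _ = (1 - ρ)⁻¹ := tsum_geometric_of_lt_one h0 h1

lemma sum_err_bound {d : ℕ} (r : Fin d → ℝ) {C ρ : ℝ} (hC : 0 < C) (hρ0 : 0 ≤ ρ) (hρ1 : ρ < 1)
    (hb : ∀ (n : ℕ) (x : Fin d → ℝ), ‖((companion r) ^ n).mulVec x‖ ≤ C * ρ ^ n * ‖x‖)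
    (m k : ℕ) (w : Fin d → ℤ) :
    ‖∑ j ∈ Finset.range k, ((companion r) ^ (m + (k - 1 - j))).mulVec
        (digitVec (Int.fract (srsDot r ((srsTau r)^[j] w))))‖
      ≤ C * ρ ^ m * (1 - ρ)⁻¹ := by
  calc ‖∑ j ∈ Finset.range k, ((companion r) ^ (m + (k - 1 - j))).mulVec
        (digitVec (Int.fract (srsDot r ((srsTau r)^[j] w))))‖
      ≤ ∑ j ∈ Finset.range k, ‖((companion r) ^ (m + (k - 1 - j))).mulVec
        (digitVec (Int.fract (srsDot r ((srsTau r)^[j] w))))‖ := norm_sum_le _ _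
    _ ≤ ∑ j ∈ Finset.range k, C * ρ ^ (m + (k - 1 - j)) := by
        refine Finset.sum_le_sum (fun j _ => ?_)
        calc ‖((companion r) ^ (m + (k - 1 - j))).mulVec
              (digitVec (Int.fract (srsDot r ((srsTau r)^[j] w))))‖
            ≤ C * ρ ^ (m + (k - 1 - j)) * ‖(digitVec (Int.fract (srsDot r ((srsTau r)^[j] w))) : Fin d → ℝ)‖ := hb _ _
          _ ≤ C * ρ ^ (m + (k - 1 - j)) * 1 := by
              refine mul_le_mul_of_nonneg_left (norm_digitVec_fract _) ?_
              positivity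
          _ = C * ρ ^ (m + (k - 1 - j)) := mul_one _
    _ = C * ρ ^ m * ∑ j ∈ Finset.range k, ρ ^ (k - 1 - j) := by
        rw [Finset.mul_sum]
        refine Finset.sum_congr rfl (fun j _ => ?_)
        rw [pow_add]; ring
    _ = C * ρ ^ m * ∑ i ∈ Finset.range k, ρ ^ i := by
        rw [Finset.sum_range_reflect (fun i => ρ ^ i) k]
    _ ≤ C * ρ ^ m * (1 - ρ)⁻¹ := by
        refine mul_le_mul_of_nonneg_left (geom_sum_le_inv hρ0 hρ1 k) ?_
        positivity

lemma companion_mulVec_lt {d : ℕ} (r : Fin d → ℝ) (w : Fin d → ℝ) (i : Fin d)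
    (h : (i : ℕ) + 1 < d) : (companion r).mulVec w i = w ⟨(i : ℕ) + 1, h⟩ := by
  simp only [Matrix.mulVec, dotProduct, companion, if_pos h]
  have : ∀ j : Fin d, (if (j : ℕ) = (i : ℕ) + 1 then (1:ℝ) else 0) * w j
      = if j = (⟨(i:ℕ)+1, h⟩ : Fin d) then w j else 0 := by
    intro j
    by_cases hj : (j : ℕ) = (i : ℕ) + 1
    · rw [if_pos hj, if_pos (Fin.ext hj), one_mul]
    · rw [if_neg hj, if_neg (fun hc => hj (by rw [hc])), zero_mul]
  simp only [this, Finset.sum_ite_eq' Finset.univ, Finset.mem_univ, if_true]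

lemma companion_mulVec_last {d : ℕ} (r : Fin d → ℝ) (w : Fin d → ℝ) (i : Fin d)
    (h : ¬ ((i : ℕ) + 1 < d)) : (companion r).mulVec w i = -∑ j, r j * w j := by
  simp only [Matrix.mulVec, dotProduct, companion, if_neg h, neg_mul, Finset.sum_neg_distrib]

lemma companion_isUnit {d : ℕ} (hd : 0 < d) (r : Fin d → ℝ) (hr0 : r ⟨0, hd⟩ ≠ 0) :
    IsUnit (companion r) := by
  rw [← Matrix.mulVec_injective_iff_isUnit]
  have key : ∀ w : Fin d → ℝ, (companion r).mulVec w = 0 → w = 0 := by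
    intro w hw
    have h1 : ∀ j : Fin d, (j : ℕ) ≠ 0 → w j = 0 := by
      intro j hj
      obtain ⟨t, ht⟩ : ∃ t, (j : ℕ) = t + 1 := ⟨(j : ℕ) - 1, by omega⟩
      have htd : t + 1 < d := ht ▸ j.isLt
      have hlt : t < d := Nat.lt_of_succ_lt htd
      have := companion_mulVec_lt r w ⟨t, hlt⟩ htd
      rw [hw] at this
      have hj' : j = (⟨t + 1, htd⟩ : Fin d) := Fin.ext ht
      rw [hj', ← this]; rfl
    have h0 : w ⟨0, hd⟩ = 0 := by
      have hdm : d - 1 < d := Nat.sub_lt hd one_pos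
      have hnl : ¬ (((⟨d - 1, hdm⟩ : Fin d) : ℕ) + 1 < d) := by simp; omega
      have := companion_mulVec_last r w ⟨d - 1, hdm⟩ hnl
      rw [hw] at this
      have hsum : ∑ j, r j * w j = r ⟨0, hd⟩ * w ⟨0, hd⟩ := by
        refine Finset.sum_eq_single _ (fun j _ hj => ?_) (by simp)
        rw [h1 j (fun hc => hj (Fin.ext hc)), mul_zero]
      have : r ⟨0, hd⟩ * w ⟨0, hd⟩ = 0 := by
        have := this.symm
        rw [hsum] at this
        simpa using this
      exact (mul_eq_zero.mp this).resolve_left hr0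
    funext j
    by_cases hj : (j : ℕ) = 0
    · rw [show j = (⟨0, hd⟩ : Fin d) from Fin.ext hj]; exact h0
    · exact h1 j hj
  intro a b hab
  have : (companion r).mulVec (a - b) = 0 := by
    rw [Matrix.mulVec_sub, hab, sub_self]
  exact sub_eq_zero.mp (key _ this)

lemma companion_pow_surjective {d : ℕ} (hd : 0 < d) (r : Fin d → ℝ) (hr0 : r ⟨0, hd⟩ ≠ 0)
    (n : ℕ) : Function.Surjective ((companion r) ^ n).mulVec :=
  Matrix.mulVec_surjective_iff_isUnit.mpr ((companion_isUnit hd r hr0).pow n)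


/-- the SRS tiles cover ℝ^d. -/
theorem srsTile_covering (d : ℕ) (hd : 0 < d) (r : Fin d → ℝ)
    (hr0 : r ⟨0, hd⟩ ≠ 0) (hcontr : srsContractive r) :
    ⋃ x : Fin d → ℤ, srsTile r x = Set.univ := by
  obtain ⟨C, hC, ρ, hρ0, hρ1, hb⟩ := hcontr
  rw [Set.eq_univ_iff_forall]
  intro t
  rw [Set.mem_iUnion]
  choose y hy using fun n => companion_pow_surjective hd r hr0 n t
  set z : ℕ → (Fin d → ℤ) := fun n i => ⌊y n i⌋ with hzdef
  set v : ℕ → (Fin d → ℝ) := fun n => ((companion r) ^ n).mulVec (intToReal (z n)) with hvdef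
  have hnear : ∀ n, ‖v n - t‖ ≤ C * ρ ^ n := by
    intro n
    have hveq : v n - t = ((companion r) ^ n).mulVec (intToReal (z n) - y n) := by
      rw [Matrix.mulVec_sub, hy n]
    rw [hveq]
    calc ‖((companion r) ^ n).mulVec (intToReal (z n) - y n)‖
        ≤ C * ρ ^ n * ‖intToReal (z n) - y n‖ := hb _ _
      _ ≤ C * ρ ^ n * 1 := by
          refine mul_le_mul_of_nonneg_left ?_ (by positivity)
          rw [pi_norm_le_iff_of_nonneg zero_le_one]
          intro i
          simp only [intToReal, Pi.sub_apply, Real.norm_eq_abs]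
          rw [abs_sub_comm, Int.self_sub_floor, abs_of_nonneg (Int.fract_nonneg _)]
          exact (Int.fract_lt_one _).le
      _ = C * ρ ^ n := mul_one _
  have hvt : Tendsto v atTop (nhds t) := by
    have h0 : Tendsto (fun n => C * ρ ^ n) atTop (nhds 0) := by
      simpa using (tendsto_pow_atTop_nhds_zero_of_lt_one hρ0 hρ1).const_mul C
    have h1 : Tendsto (fun n => v n - t) atTop (nhds 0) := squeeze_zero_norm hnear h0
    have h2 := h1.add_const t
    simpa using h2
  set X : ℕ → (Fin d → ℤ) := fun n => (srsTau r)^[n] (z n) with hXdef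
  set B : ℝ := ‖t‖ + C + C * (1 - ρ)⁻¹ with hBdef
  have hXbd : ∀ n, ‖intToReal (X n)‖ ≤ B := by
    intro n
    have hexp := srsTau_iterate r (z n) n
    have hS := sum_err_bound r hC hρ0 hρ1 hb 0 n (z n)
    simp only [Nat.zero_add, pow_zero, mul_one] at hS
    have hvn : ‖v n‖ ≤ ‖t‖ + C := by
      calc ‖v n‖ = ‖t + (v n - t)‖ := by ring_nf
        _ ≤ ‖t‖ + ‖v n - t‖ := norm_add_le _ _
        _ ≤ ‖t‖ + C * ρ ^ n := by linarith [hnear n]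
        _ ≤ ‖t‖ + C := by
            have : ρ ^ n ≤ 1 := pow_le_one₀ hρ0 hρ1.le
            nlinarith
    calc ‖intToReal (X n)‖
        = ‖v n + ∑ j ∈ Finset.range n, ((companion r) ^ (n - 1 - j)).mulVec
            (digitVec (Int.fract (srsDot r ((srsTau r)^[j] (z n)))))‖ := by
          rw [hXdef]; rw [hexp]
      _ ≤ ‖v n‖ + ‖∑ j ∈ Finset.range n, ((companion r) ^ (n - 1 - j)).mulVec
            (digitVec (Int.fract (srsDot r ((srsTau r)^[j] (z n)))))‖ := norm_add_le _ _
      _ ≤ (‖t‖ + C) + C * (1 - ρ)⁻¹ := add_le_add hvn hS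
      _ = B := rfl
  set N : ℤ := ⌈B⌉ with hNdef
  have hmem : ∀ n, X n ∈ Set.Icc (fun _ : Fin d => -N) (fun _ : Fin d => N) := by
    intro n
    have habs : ∀ i, |(X n i : ℝ)| ≤ (N : ℝ) := by
      intro i
      have h1 : ‖intToReal (X n) i‖ ≤ ‖intToReal (X n)‖ := norm_le_pi_norm _ i
      have h2 : |(X n i : ℝ)| ≤ B := le_trans h1 (hXbd n)
      exact h2.trans (Int.le_ceil B)
    constructor
    · intro i
      have := (abs_le.mp (habs i)).1
      have : ((-N : ℤ) : ℝ) ≤ ((X n i : ℤ) : ℝ) := by push_cast; linarith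
      exact_mod_cast this
    · intro i
      have := (abs_le.mp (habs i)).2
      have : ((X n i : ℤ) : ℝ) ≤ ((N : ℤ) : ℝ) := by linarith
      exact_mod_cast this
  have hfin : (Set.Icc (fun _ : Fin d => -N) (fun _ : Fin d => N)).Finite := Set.finite_Icc _ _
  have : Finite ↥(Set.Icc (fun _ : Fin d => -N) (fun _ : Fin d => N)) := hfin.to_subtype
  obtain ⟨b, hbinf⟩ := Finite.exists_infinite_fiber
    (fun n : ℕ => (⟨X n, hmem n⟩ : ↥(Set.Icc (fun _ : Fin d => -N) (fun _ : Fin d => N))))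
  set x : Fin d → ℤ := (b : Fin d → ℤ) with hxdef
  have hA : {n : ℕ | X n = x}.Infinite := by
    have hpre : (fun n : ℕ => (⟨X n, hmem n⟩ :
        ↥(Set.Icc (fun _ : Fin d => -N) (fun _ : Fin d => N)))) ⁻¹' {b} = {n : ℕ | X n = x} := by
      ext n
      simp [Subtype.ext_iff, hxdef]
    rw [← hpre]
    exact Set.infinite_coe_iff.mp hbinf
  choose φ hφ1 hφ2 using fun m => hA.exists_gt m
  refine ⟨x, ⟨fun m => (srsTau r)^[φ m - m] (z (φ m)), ?_, ?_⟩⟩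
  · intro m
    rw [← Function.iterate_add_apply]
    have hm : m + (φ m - m) = φ m := by have := hφ2 m; omega
    rw [hm]
    exact hφ1 m
  · have key : ∀ m, ((companion r) ^ m).mulVec (intToReal ((srsTau r)^[φ m - m] (z (φ m))))
        = v (φ m) + ∑ j ∈ Finset.range (φ m - m),
            ((companion r) ^ (m + (φ m - m - 1 - j))).mulVec
              (digitVec (Int.fract (srsDot r ((srsTau r)^[j] (z (φ m)))))) := by
      intro m
      rw [srsTau_iterate r (z (φ m)) (φ m - m), Matrix.mulVec_add]
      congr 1
      · rw [Matrix.mulVec_mulVec, ← pow_add]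
        have hm : m + (φ m - m) = φ m := by have := hφ2 m; omega
        rw [hm]
      · rw [show ((companion r) ^ m).mulVec (∑ j ∈ Finset.range (φ m - m),
            ((companion r) ^ (φ m - m - 1 - j)).mulVec
              (digitVec (Int.fract (srsDot r ((srsTau r)^[j] (z (φ m)))))))
          = ∑ j ∈ Finset.range (φ m - m), ((companion r) ^ m).mulVec
              (((companion r) ^ (φ m - m - 1 - j)).mulVec
                (digitVec (Int.fract (srsDot r ((srsTau r)^[j] (z (φ m)))))))
          from map_sum (Matrix.mulVecLin ((companion r) ^ m)) _ _]
        refine Finset.sum_congr rfl (fun j _ => ?_)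
        rw [Matrix.mulVec_mulVec, ← pow_add]
    have h1 : Tendsto (fun m => v (φ m)) atTop (nhds t) :=
      hvt.comp (tendsto_atTop_mono (fun m => (hφ2 m).le) tendsto_id)
    have h2 : Tendsto (fun m => ∑ j ∈ Finset.range (φ m - m),
        ((companion r) ^ (m + (φ m - m - 1 - j))).mulVec
          (digitVec (Int.fract (srsDot r ((srsTau r)^[j] (z (φ m)))))))
        atTop (nhds 0) := by
      refine squeeze_zero_norm (fun m => sum_err_bound r hC hρ0 hρ1 hb m (φ m - m) (z (φ m))) ?_
      have : Tendsto (fun m => C * ρ ^ m * (1 - ρ)⁻¹) atTop (nhds 0) := by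
        have := ((tendsto_pow_atTop_nhds_zero_of_lt_one hρ0 hρ1).const_mul C).mul_const (1 - ρ)⁻¹
        simpa using this
      exact this
    have h3 := h1.add h2
    rw [add_zero] at h3
    have hfun : (fun m => ((companion r) ^ m).mulVec
        (intToReal ((srsTau r)^[φ m - m] (z (φ m)))))
        = fun m => v (φ m) + ∑ j ∈ Finset.range (φ m - m),
            ((companion r) ^ (m + (φ m - m - 1 - j))).mulVec
              (digitVec (Int.fract (srsDot r ((srsTau r)^[j] (z (φ m)))))) := funext key
    rw [hfun]
    exact h3
end
end

section
/- Let r ∈ int(D_d) be reduced. The cardinality of {x ∈ ℤ^d : t ∈ T_r(x)} is uniformly bounded over t ∈ ℝ^d, and the family {T_r(x) : x ∈ ℤ^d} is locally finite: every open ball intersects only finitely many tiles. -/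
open Matrix Filter

noncomputable section

/-- the norm of a digit vector is bounded by the absolute value of its entry -/
lemma digitVec_norm_le {d : ℕ} (v : ℝ) (hv : |v| ≤ 1) :
    ‖(digitVec v : Fin d → ℝ)‖ ≤ 1 := by
  rw [pi_norm_le_iff_of_nonneg zero_le_one]
  intro i
  simp only [digitVec]
  split
  · simpa using hv
  · simp

/-- the key one-step identity -/
lemma companion_mulVec_intToReal {d : ℕ} (r : Fin d → ℝ) (z : Fin d → ℤ) :
    (companion r).mulVec (intToReal z) =
      intToReal (srsTau r z) + digitVec ((⌊srsDot r z⌋ : ℝ) - srsDot r z) := by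
  funext i
  simp only [companion, mulVec, dotProduct, intToReal, srsTau, digitVec, Pi.add_apply]
  by_cases h : (i : ℕ) + 1 < d
  · have hne : ¬ ((i : ℕ) + 1 = d) := by omega
    have hkey : ∀ j : Fin d,
        (if (j : ℕ) = (i : ℕ) + 1 then (1:ℝ) else 0) * (z j : ℝ)
          = if j = (⟨(i : ℕ) + 1, h⟩ : Fin d) then (z j : ℝ) else 0 := by
      intro j
      by_cases hj : (j : ℕ) = (i : ℕ) + 1
      · have : j = (⟨(i : ℕ) + 1, h⟩ : Fin d) := Fin.ext hj
        simp [hj, this]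
      · have : j ≠ (⟨(i : ℕ) + 1, h⟩ : Fin d) := by
          intro hc; apply hj; rw [hc]
        simp [hj, this]
    simp only [h, if_true, dif_pos h, hne, if_false]
    rw [Finset.sum_congr rfl (fun j _ => hkey j), Finset.sum_ite_eq' Finset.univ]
    simp
  · have he : (i : ℕ) + 1 = d := by omega
    simp only [if_neg h, dif_neg h, if_pos he]
    have hsum : ∑ j : Fin d, -r j * ((z j : ℤ) : ℝ) = -srsDot r z := by
      rw [srsDot, ← Finset.sum_neg_distrib]
      exact Finset.sum_congr rfl (fun j _ => by ring)
    rw [hsum]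
    push_cast
    ring

/-- the iterated telescoping bound -/
lemma iter_bound {d : ℕ} (r : Fin d → ℝ) (C ρ : ℝ) (hC : 0 ≤ C) (hρ0 : 0 ≤ ρ)
    (hcon : ∀ (n : ℕ) (x : Fin d → ℝ),
      ‖((companion r) ^ n).mulVec x‖ ≤ C * ρ ^ n * ‖x‖) :
    ∀ (n : ℕ) (z : Fin d → ℤ),
      ‖((companion r) ^ n).mulVec (intToReal z) - intToReal ((srsTau r)^[n] z)‖
        ≤ ∑ k ∈ Finset.range n, C * ρ ^ k := by
  intro n
  induction n with
  | zero => intro z; simp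
  | succ n ih =>
    intro z
    have h1 : ((companion r) ^ (n + 1)).mulVec (intToReal z)
        = ((companion r) ^ n).mulVec ((companion r).mulVec (intToReal z)) := by
      rw [pow_succ]
      exact (mulVec_mulVec _ _ _).symm
    rw [h1, companion_mulVec_intToReal, mulVec_add, Function.iterate_succ_apply]
    have hsplit :
        ((companion r) ^ n).mulVec (intToReal (srsTau r z))
          + ((companion r) ^ n).mulVec (digitVec ((⌊srsDot r z⌋ : ℝ) - srsDot r z))
          - intToReal ((srsTau r)^[n] (srsTau r z))
        = (((companion r) ^ n).mulVec (intToReal (srsTau r z))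
            - intToReal ((srsTau r)^[n] (srsTau r z)))
          + ((companion r) ^ n).mulVec (digitVec ((⌊srsDot r z⌋ : ℝ) - srsDot r z)) := by
      abel
    rw [hsplit]
    have hd : |(⌊srsDot r z⌋ : ℝ) - srsDot r z| ≤ 1 := by
      rw [abs_le]
      constructor
      · have := Int.lt_floor_add_one (srsDot r z); linarith
      · have := Int.floor_le (srsDot r z); linarith
    have h2 : ‖((companion r) ^ n).mulVec (digitVec ((⌊srsDot r z⌋ : ℝ) - srsDot r z))‖
        ≤ C * ρ ^ n := by
      calc ‖((companion r) ^ n).mulVec (digitVec ((⌊srsDot r z⌋ : ℝ) - srsDot r z))‖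
          ≤ C * ρ ^ n * ‖(digitVec ((⌊srsDot r z⌋ : ℝ) - srsDot r z) : Fin d → ℝ)‖ :=
            hcon n _
        _ ≤ C * ρ ^ n * 1 := by
            have hCρ : 0 ≤ C * ρ ^ n := mul_nonneg hC (pow_nonneg hρ0 n)
            exact mul_le_mul_of_nonneg_left (digitVec_norm_le _ hd) hCρ
        _ = C * ρ ^ n := mul_one _
    calc ‖(((companion r) ^ n).mulVec (intToReal (srsTau r z))
            - intToReal ((srsTau r)^[n] (srsTau r z)))
          + ((companion r) ^ n).mulVec (digitVec ((⌊srsDot r z⌋ : ℝ) - srsDot r z))‖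
        ≤ ‖((companion r) ^ n).mulVec (intToReal (srsTau r z))
            - intToReal ((srsTau r)^[n] (srsTau r z))‖
          + ‖((companion r) ^ n).mulVec (digitVec ((⌊srsDot r z⌋ : ℝ) - srsDot r z))‖ :=
          norm_add_le _ _
      _ ≤ (∑ k ∈ Finset.range n, C * ρ ^ k) + C * ρ ^ n := add_le_add (ih _) h2
      _ = ∑ k ∈ Finset.range (n + 1), C * ρ ^ k := (Finset.sum_range_succ _ n).symm

/-- Points of a tile lie within distance `R` of the lattice point. -/
lemma srsTile_dist_le {d : ℕ} (r : Fin d → ℝ) (C ρ : ℝ) (hC : 0 < C)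
    (hρ0 : 0 ≤ ρ) (hρ1 : ρ < 1)
    (hcon : ∀ (n : ℕ) (x : Fin d → ℝ),
      ‖((companion r) ^ n).mulVec x‖ ≤ C * ρ ^ n * ‖x‖)
    (x : Fin d → ℤ) (t : Fin d → ℝ) (ht : t ∈ srsTile r x) :
    ‖t - intToReal x‖ ≤ C * (1 - ρ)⁻¹ := by
  obtain ⟨z, hz, htend⟩ := ht
  have h1 : (0:ℝ) < 1 - ρ := by linarith
  have hgeom : ∀ n : ℕ, ∑ k ∈ Finset.range n, C * ρ ^ k ≤ C * (1 - ρ)⁻¹ := by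
    intro n
    rw [← Finset.mul_sum]
    apply mul_le_mul_of_nonneg_left _ hC.le
    rw [geom_sum_eq hρ1.ne n]
    have heq : (ρ ^ n - 1) / (ρ - 1) = (1 - ρ ^ n) / (1 - ρ) := by
      rw [div_eq_div_iff (by linarith) h1.ne']; ring
    rw [heq, div_le_iff₀ h1, inv_mul_cancel₀ h1.ne']
    have := pow_nonneg hρ0 n
    linarith
  have hbd : ∀ n : ℕ,
      ‖((companion r) ^ n).mulVec (intToReal (z n)) - intToReal x‖ ≤ C * (1 - ρ)⁻¹ := by
    intro n
    have := iter_bound r C ρ hC.le hρ0 hcon n (z n)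
    rw [hz n] at this
    exact le_trans this (hgeom n)
  have hlim : Tendsto (fun n => ‖((companion r) ^ n).mulVec (intToReal (z n)) - intToReal x‖)
      atTop (nhds ‖t - intToReal x‖) := (htend.sub_const (intToReal x)).norm
  exact le_of_tendsto' hlim hbd

/-- Integer lattice points within distance `R` of a point form a finite set of
cardinality at most `(⌊2R⌋₊ + 1)^d`. -/
lemma latticeBall_finite_card {d : ℕ} (c : Fin d → ℝ) (R : ℝ) (hR : 0 ≤ R) :
    {x : Fin d → ℤ | ‖c - intToReal x‖ ≤ R}.Finite ∧
    {x : Fin d → ℤ | ‖c - intToReal x‖ ≤ R}.ncard ≤ ((⌊2 * R⌋).toNat + 1) ^ d := by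
  set N : ℤ := ⌊2 * R⌋ with hN
  have hN0 : 0 ≤ N := Int.floor_nonneg.mpr (by linarith)
  set F : Finset (Fin d → ℤ) :=
    Fintype.piFinset (fun i => Finset.Icc ⌈c i - R⌉ (⌈c i - R⌉ + N)) with hF
  have hsub : {x : Fin d → ℤ | ‖c - intToReal x‖ ≤ R} ⊆ ↑F := by
    intro x hx
    simp only [Set.mem_setOf_eq] at hx
    simp only [hF, Finset.coe_sort_coe, Finset.mem_coe, Fintype.mem_piFinset]
    intro i
    have hcoord : |c i - (x i : ℝ)| ≤ R := by
      have h := norm_le_pi_norm (c - intToReal x) i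
      have : ‖(c - intToReal x) i‖ = |c i - (x i : ℝ)| := by
        simp [intToReal, Real.norm_eq_abs]
      rw [this] at h
      exact le_trans h hx
    rw [abs_le] at hcoord
    rw [Finset.mem_Icc]
    constructor
    · exact Int.ceil_le.mpr (by linarith [hcoord.1])
    · have : ((x i : ℤ) : ℝ) ≤ (⌈c i - R⌉ : ℝ) + 2 * R := by
        have := Int.le_ceil (c i - R)
        linarith [hcoord.2]
      have h2 : (x i : ℤ) - ⌈c i - R⌉ ≤ N := by
        rw [hN]
        apply Int.le_floor.mpr
        push_cast
        linarith
      omega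
  have hfin : {x : Fin d → ℤ | ‖c - intToReal x‖ ≤ R}.Finite :=
    Set.Finite.subset F.finite_toSet hsub
  refine ⟨hfin, ?_⟩
  have hcard : F.card = ((N).toNat + 1) ^ d := by
    rw [hF, Fintype.card_piFinset]
    have : ∀ i : Fin d, (Finset.Icc ⌈c i - R⌉ (⌈c i - R⌉ + N)).card = N.toNat + 1 := by
      intro i
      rw [Int.card_Icc]
      omega
    rw [Finset.prod_congr rfl (fun i _ => this i), Finset.prod_const,
      Finset.card_univ, Fintype.card_fin]
  calc {x : Fin d → ℤ | ‖c - intToReal x‖ ≤ R}.ncard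
      ≤ (↑F : Set (Fin d → ℤ)).ncard := Set.ncard_le_ncard hsub F.finite_toSet
    _ = F.card := Set.ncard_coe_finset F
    _ = ((N).toNat + 1) ^ d := hcard

/-- the number of tiles containing a point t is uniformly bounded,
and the family of SRS tiles is locally finite. -/
theorem srsTile_boundedDegree_locallyFinite (d : ℕ) (hd : 0 < d) (r : Fin d → ℝ)
    (hr0 : r ⟨0, hd⟩ ≠ 0) (hcontr : srsContractive r) :
    (∃ B : ℕ, ∀ t : Fin d → ℝ,
      {x : Fin d → ℤ | t ∈ srsTile r x}.Finite ∧
      {x : Fin d → ℤ | t ∈ srsTile r x}.ncard ≤ B) ∧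
    ∀ (c : Fin d → ℝ) (ε : ℝ), 0 < ε →
      {x : Fin d → ℤ | (Metric.ball c ε ∩ srsTile r x).Nonempty}.Finite := by
  obtain ⟨C, hC, ρ, hρ0, hρ1, hcon⟩ := hcontr
  set R : ℝ := C * (1 - ρ)⁻¹ with hRdef
  have hRpos : 0 < R := mul_pos hC (inv_pos.mpr (by linarith))
  have hkey : ∀ (x : Fin d → ℤ) (t : Fin d → ℝ), t ∈ srsTile r x → ‖t - intToReal x‖ ≤ R :=
    fun x t ht => srsTile_dist_le r C ρ hC hρ0 hρ1 hcon x t ht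
  constructor
  · refine ⟨((⌊2 * R⌋).toNat + 1) ^ d, fun t => ?_⟩
    have hsub : {x : Fin d → ℤ | t ∈ srsTile r x} ⊆
        {x : Fin d → ℤ | ‖t - intToReal x‖ ≤ R} := fun x hx => hkey x t hx
    obtain ⟨hfin, hcard⟩ := latticeBall_finite_card t R hRpos.le
    exact ⟨hfin.subset hsub, le_trans (Set.ncard_le_ncard hsub hfin) hcard⟩
  · intro c ε hε
    have hsub : {x : Fin d → ℤ | (Metric.ball c ε ∩ srsTile r x).Nonempty} ⊆
        {x : Fin d → ℤ | ‖c - intToReal x‖ ≤ R + ε} := by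
      intro x hx
      obtain ⟨t, htb, htt⟩ := hx
      have h1 : ‖t - intToReal x‖ ≤ R := hkey x t htt
      have h2 : ‖c - t‖ < ε := by
        rw [Metric.mem_ball, dist_comm] at htb
        simpa [dist_eq_norm] using htb
      have : c - intToReal x = (c - t) + (t - intToReal x) := by abel
      simp only [Set.mem_setOf_eq, this]
      calc ‖(c - t) + (t - intToReal x)‖ ≤ ‖c - t‖ + ‖t - intToReal x‖ := norm_add_le _ _
        _ ≤ R + ε := by linarith
    exact ((latticeBall_finite_card c (R + ε) (by linarith)).1).subset hsub
end
end
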